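/- arXiv:2107.05261 — 11 statements merged into one kernel-verified Lean document; each statement's English description precedes it below -/
import Mathlib

section
/- In the category of coherence spaces, two morphisms s0, s1 ∈ COH(E,F) are summable (i.e., there exists g ∈ COH(E, S F) with π_i ∘ g = s_i) if and only if s0 ∩ s1 = ∅ and s0 ∪ s1 ∈ COH(E,F). -/
structure CoherenceSpace where
  web : Type
  coh : web → web → Prop
  refl : ∀ a, coh a a
  symm : ∀ a b, coh a b → coh b a

def CoherenceSpace.Clique (E : CoherenceSpace) (x : Set E.web) : Prop :=
  ∀ a ∈ x, ∀ b ∈ x, E.coh a b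

def CoherenceSpace.Sfun (E : CoherenceSpace) : CoherenceSpace where
  web := Bool × E.web
  coh p q := (p.1 = q.1 ∧ E.coh p.2 q.2) ∨ (p.1 ≠ q.1 ∧ E.coh p.2 q.2 ∧ p.2 ≠ q.2)
  refl a := Or.inl ⟨rfl, E.refl a.2⟩
  symm a b h := by
    rcases h with ⟨h1, h2⟩ | ⟨h1, h2, h3⟩
    · exact Or.inl ⟨h1.symm, E.symm _ _ h2⟩
    · exact Or.inr ⟨fun e => h1 e.symm, E.symm _ _ h2, fun e => h3 e.symm⟩

/-- The linear function space E ⊸ F of coherence spaces. -/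
def CoherenceSpace.Limpl (E F : CoherenceSpace) : CoherenceSpace where
  web := E.web × F.web
  coh p q := E.coh p.1 q.1 → (F.coh p.2 q.2 ∧ (p.2 = q.2 → p.1 = q.1))
  refl a := fun _ => ⟨F.refl a.2, fun _ => rfl⟩
  symm a b h := fun hc => by
    have h' := h (E.symm _ _ hc)
    exact ⟨F.symm _ _ h'.1, fun e => (h'.2 e.symm).symm⟩

/-- Relational composition. -/
def relComp {α β γ : Type} (s : Set (α × β)) (t : Set (β × γ)) : Set (α × γ) :=
  {p | ∃ b, (p.1, b) ∈ s ∧ (b, p.2) ∈ t}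

/-- The projections π_i = {((i, b), b) | b ∈ |F|} ∈ COH(S F, F). -/
def CoherenceSpace.proj (F : CoherenceSpace) (i : Bool) : Set ((F.Sfun).web × F.web) :=
  {p | p.1 = (i, p.2)}

/-- Two morphisms s0, s1 ∈ COH(E,F) are summable (there is g ∈ COH(E, S F) with
π_i ∘ g = s_i) iff s0 ∩ s1 = ∅ and s0 ∪ s1 ∈ COH(E,F). -/
theorem stmt1 (E F : CoherenceSpace) (s0 s1 : Set ((E.Limpl F).web))
    (h0 : (E.Limpl F).Clique s0) (h1 : (E.Limpl F).Clique s1) :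
    (∃ g : Set ((E.Limpl F.Sfun).web), (E.Limpl F.Sfun).Clique g ∧
        relComp g (F.proj false) = s0 ∧ relComp g (F.proj true) = s1)
    ↔ (s0 ∩ s1 = ∅ ∧ (E.Limpl F).Clique (s0 ∪ s1)) := by
  have key : ∀ (g : Set ((E.Limpl F.Sfun).web)) (i : Bool) (a : E.web) (b : F.web),
      (a, b) ∈ relComp g (F.proj i) ↔ (a, (i, b)) ∈ g := by
    intro g i a b
    constructor
    · rintro ⟨c, hc, hp⟩
      have : c = (i, b) := hp
      rwa [this] at hc
    · intro h
      exact ⟨(i, b), h, rfl⟩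
  constructor
  · rintro ⟨g, hg, rfl, rfl⟩
    constructor
    · apply Set.eq_empty_iff_forall_notMem.2
      rintro ⟨a, b⟩ ⟨hA, hB⟩
      have hA' := (key g false a b).1 hA
      have hB' := (key g true a b).1 hB
      have h := hg _ hA' _ hB' (E.refl a)
      rcases h.1 with ⟨h1, _⟩ | ⟨_, _, h3⟩
      · exact Bool.noConfusion h1
      · exact h3 rfl
    · rintro ⟨a, b⟩ hp ⟨a', b'⟩ hq hcoh
      obtain ⟨i, hp'⟩ : ∃ i, (a, (i, b)) ∈ g := by
        rcases hp with hp | hp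
        · exact ⟨false, (key g false a b).1 hp⟩
        · exact ⟨true, (key g true a b).1 hp⟩
      obtain ⟨j, hq'⟩ : ∃ j, (a', (j, b')) ∈ g := by
        rcases hq with hq | hq
        · exact ⟨false, (key g false a' b').1 hq⟩
        · exact ⟨true, (key g true a' b').1 hq⟩
      have h := hg _ hp' _ hq' hcoh
      constructor
      · rcases h.1 with ⟨_, h2⟩ | ⟨_, h2, _⟩ <;> exact h2
      · intro hbb
        rcases h.1 with ⟨hij, _⟩ | ⟨_, _, h3⟩
        · exact h.2 (by rw [show i = j from hij, show b = b' from hbb])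
        · exact absurd hbb h3
  · rintro ⟨hdisj, hunion⟩
    refine ⟨{p | (p.2.1 = false ∧ (p.1, p.2.2) ∈ s0) ∨ (p.2.1 = true ∧ (p.1, p.2.2) ∈ s1)},
      ?_, ?_, ?_⟩
    · rintro ⟨a, i, b⟩ hp ⟨a', j, b'⟩ hq hcoh
      have hpm : (a, b) ∈ s0 ∪ s1 := by
        rcases hp with ⟨_, h⟩ | ⟨_, h⟩
        · exact Or.inl h
        · exact Or.inr h
      have hqm : (a', b') ∈ s0 ∪ s1 := by
        rcases hq with ⟨_, h⟩ | ⟨_, h⟩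
        · exact Or.inl h
        · exact Or.inr h
      have h := hunion _ hpm _ hqm hcoh
      have hne : b = b' → i ≠ j → False := by
        intro hbb hij
        have haa : a = a' := h.2 hbb
        have : (a, b) ∈ s0 ∩ s1 := by
          rcases hp with ⟨hi, hs⟩ | ⟨hi, hs⟩ <;> rcases hq with ⟨hj, ht⟩ | ⟨hj, ht⟩
          · exact absurd (hi.trans hj.symm) hij
          · exact ⟨hs, by rw [hbb, haa]; exact ht⟩
          · exact ⟨by rw [hbb, haa]; exact ht, hs⟩
          · exact absurd (hi.trans hj.symm) hij
        rw [hdisj] at this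
        exact this
      refine ⟨?_, ?_⟩
      · by_cases hij : i = j
        · exact Or.inl ⟨hij, h.1⟩
        · exact Or.inr ⟨hij, h.1, fun e => hne e hij⟩
      · intro he
        exact h.2 (Prod.ext_iff.1 he).2
    · ext ⟨a, b⟩
      rw [key]
      show ((false : Bool) = false ∧ _) ∨ ((false : Bool) = true ∧ _) ↔ _
      simp
      exact Iff.rfl
    · ext ⟨a, b⟩
      rw [key]
      show ((true : Bool) = false ∧ _) ∨ ((true : Bool) = true ∧ _) ↔ _
      simp
      exact Iff.rfl
end

section
/- In a summable category, if f00, f01, f10, f11 ∈ L(X,Y) are such that (f00,f01) and (f10,f11) are summable and (f00+f01, f10+f11) is summable, then (f00,f10) and (f01,f11) are summable, (f00+f10, f01+f11) is summable, and (f00+f01)+(f10+f11) = (f00+f10)+(f01+f11). -/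
open CategoryTheory Limits

universe v u

/-- A pre-summability structure on a category enriched over pointed sets
(rendered via zero morphisms): a functor S preserving zero morphisms with
three natural transformations π0, π1, σ to the identity such that π0, π1
are jointly monic. -/
structure PreSummability (L : Type u) [Category.{v} L] [HasZeroMorphisms L] where
  S : L ⥤ L
  p0 : S ⟶ 𝟭 L
  p1 : S ⟶ 𝟭 L
  sg : S ⟶ 𝟭 L
  S_zero : ∀ (X Y : L), S.map (0 : X ⟶ Y) = 0
  jointly_monic : ∀ {X Y : L} (f g : X ⟶ S.obj Y),
    f ≫ p0.app Y = g ≫ p0.app Y → f ≫ p1.app Y = g ≫ p1.app Y → f = g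

variable {L : Type u} [Category.{v} L] [HasZeroMorphisms L]

/-- `w` is the witness of summability of `f0` and `f1`. -/
def PreSummability.IsWitness (P : PreSummability L) {X Y : L}
    (f0 f1 : X ⟶ Y) (w : X ⟶ P.S.obj Y) : Prop :=
  w ≫ P.p0.app Y = f0 ∧ w ≫ P.p1.app Y = f1

/-- `f0` and `f1` are summable. -/
def PreSummability.Summable (P : PreSummability L) {X Y : L} (f0 f1 : X ⟶ Y) : Prop :=
  ∃ w, P.IsWitness f0 f1 w

/-- `s` is the sum `f0 + f1` of the summable pair `(f0, f1)`. -/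
def PreSummability.IsSum (P : PreSummability L) {X Y : L} (f0 f1 s : X ⟶ Y) : Prop :=
  ∃ w, P.IsWitness f0 f1 w ∧ w ≫ P.sg.app Y = s

/-- A summability structure: a pre-summability structure satisfying the axioms
(S-com), (S-zero), (S-wit) and (S-ass). In (S-ass) the flip `c` is
characterized by the equations π_i ∘ π_j ∘ c = π_j ∘ π_i. -/
structure SummabilityStructure (L : Type u) [Category.{v} L] [HasZeroMorphisms L]
    extends PreSummability L where
  ax_com : ∀ X : L, ∃ w : S.obj X ⟶ S.obj X,
    toPreSummability.IsWitness (p1.app X) (p0.app X) w ∧ w ≫ sg.app X = sg.app X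
  ax_zero : ∀ {X Y : L} (f : X ⟶ Y), toPreSummability.IsSum f 0 f
  ax_wit : ∀ {X Y : L} (w0 w1 : X ⟶ S.obj Y),
    toPreSummability.Summable (w0 ≫ sg.app Y) (w1 ≫ sg.app Y) →
    toPreSummability.Summable w0 w1
  ax_ass : ∀ (X : L) (c : S.obj (S.obj X) ⟶ S.obj (S.obj X)),
    (c ≫ p0.app (S.obj X) ≫ p0.app X = p0.app (S.obj X) ≫ p0.app X) →
    (c ≫ p0.app (S.obj X) ≫ p1.app X = p1.app (S.obj X) ≫ p0.app X) →
    (c ≫ p1.app (S.obj X) ≫ p0.app X = p0.app (S.obj X) ≫ p1.app X) →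
    (c ≫ p1.app (S.obj X) ≫ p1.app X = p1.app (S.obj X) ≫ p1.app X) →
    c ≫ S.map (sg.app X) = sg.app (S.obj X)

/-- In a summable category: if `(f00,f01)` and `(f10,f11)` are summable with
sums `s0, s1` and `(s0, s1)` is summable with sum `t`, then `(f00,f10)` and
`(f01,f11)` are summable, their sums are summable, and the total sums agree:
`(f00+f01)+(f10+f11) = (f00+f10)+(f01+f11)`. -/
theorem stmt4 (Q : SummabilityStructure L) {X Y : L}
    (f00 f01 f10 f11 s0 s1 t : X ⟶ Y)
    (h0 : Q.toPreSummability.IsSum f00 f01 s0)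
    (h1 : Q.toPreSummability.IsSum f10 f11 s1)
    (ht : Q.toPreSummability.IsSum s0 s1 t) :
    ∃ u0 u1 : X ⟶ Y,
      Q.toPreSummability.IsSum f00 f10 u0 ∧
      Q.toPreSummability.IsSum f01 f11 u1 ∧
      Q.toPreSummability.IsSum u0 u1 t := by
  obtain ⟨w0, ⟨hw00, hw01⟩, hw0s⟩ := h0
  obtain ⟨w1, ⟨hw10, hw11⟩, hw1s⟩ := h1
  obtain ⟨v, ⟨hv0, hv1⟩, hvs⟩ := ht
  obtain ⟨W, hW0, hW1⟩ :=
    Q.ax_wit w0 w1 ⟨v, by rw [hw0s]; exact hv0, by rw [hw1s]; exact hv1⟩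
  have a0 : Q.S.map (Q.sg.app Y) ≫ Q.p0.app Y = Q.p0.app (Q.S.obj Y) ≫ Q.sg.app Y :=
    Q.p0.naturality _
  have a1 : Q.S.map (Q.sg.app Y) ≫ Q.p1.app Y = Q.p1.app (Q.S.obj Y) ≫ Q.sg.app Y :=
    Q.p1.naturality _
  have b0 : Q.S.map (Q.p0.app Y) ≫ Q.p0.app Y = Q.p0.app (Q.S.obj Y) ≫ Q.p0.app Y :=
    Q.p0.naturality _
  have b1 : Q.S.map (Q.p0.app Y) ≫ Q.p1.app Y = Q.p1.app (Q.S.obj Y) ≫ Q.p0.app Y :=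
    Q.p1.naturality _
  have c0 : Q.S.map (Q.p1.app Y) ≫ Q.p0.app Y = Q.p0.app (Q.S.obj Y) ≫ Q.p1.app Y :=
    Q.p0.naturality _
  have c1 : Q.S.map (Q.p1.app Y) ≫ Q.p1.app Y = Q.p1.app (Q.S.obj Y) ≫ Q.p1.app Y :=
    Q.p1.naturality _
  have d0 : Q.S.map (Q.p0.app Y) ≫ Q.sg.app Y = Q.sg.app (Q.S.obj Y) ≫ Q.p0.app Y :=
    Q.sg.naturality _
  have d1 : Q.S.map (Q.p1.app Y) ≫ Q.sg.app Y = Q.sg.app (Q.S.obj Y) ≫ Q.p1.app Y :=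
    Q.sg.naturality _
  have e : Q.S.map (Q.sg.app Y) ≫ Q.sg.app Y = Q.sg.app (Q.S.obj Y) ≫ Q.sg.app Y :=
    Q.sg.naturality _
  -- the witness v is determined by joint monicity
  have hveq : v = W ≫ Q.S.map (Q.sg.app Y) := by
    apply Q.jointly_monic
    · show v ≫ Q.p0.app Y = (W ≫ Q.S.map (Q.sg.app Y)) ≫ Q.p0.app Y
      rw [hv0, ← hw0s, Category.assoc, a0, ← Category.assoc, hW0]
    · show v ≫ Q.p1.app Y = (W ≫ Q.S.map (Q.sg.app Y)) ≫ Q.p1.app Y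
      rw [hv1, ← hw1s, Category.assoc, a1, ← Category.assoc, hW1]
  refine ⟨W ≫ Q.S.map (Q.p0.app Y) ≫ Q.sg.app Y,
          W ≫ Q.S.map (Q.p1.app Y) ≫ Q.sg.app Y, ?_, ?_, ?_⟩
  · refine ⟨W ≫ Q.S.map (Q.p0.app Y), ⟨?_, ?_⟩, ?_⟩
    · show (W ≫ Q.S.map (Q.p0.app Y)) ≫ Q.p0.app Y = f00
      rw [Category.assoc, b0, ← Category.assoc, hW0, hw00]
    · show (W ≫ Q.S.map (Q.p0.app Y)) ≫ Q.p1.app Y = f10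
      rw [Category.assoc, b1, ← Category.assoc, hW1, hw10]
    · show (W ≫ Q.S.map (Q.p0.app Y)) ≫ Q.sg.app Y = _
      rw [Category.assoc]
  · refine ⟨W ≫ Q.S.map (Q.p1.app Y), ⟨?_, ?_⟩, ?_⟩
    · show (W ≫ Q.S.map (Q.p1.app Y)) ≫ Q.p0.app Y = f01
      rw [Category.assoc, c0, ← Category.assoc, hW0, hw01]
    · show (W ≫ Q.S.map (Q.p1.app Y)) ≫ Q.p1.app Y = f11
      rw [Category.assoc, c1, ← Category.assoc, hW1, hw11]
    · show (W ≫ Q.S.map (Q.p1.app Y)) ≫ Q.sg.app Y = _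
      rw [Category.assoc]
  · refine ⟨W ≫ Q.sg.app (Q.S.obj Y), ⟨?_, ?_⟩, ?_⟩
    · show (W ≫ Q.sg.app (Q.S.obj Y)) ≫ Q.p0.app Y = W ≫ Q.S.map (Q.p0.app Y) ≫ Q.sg.app Y
      rw [Category.assoc, d0]
    · show (W ≫ Q.sg.app (Q.S.obj Y)) ≫ Q.p1.app Y = W ≫ Q.S.map (Q.p1.app Y) ≫ Q.sg.app Y
      rw [Category.assoc, d1]
    · show (W ≫ Q.sg.app (Q.S.obj Y)) ≫ Q.sg.app Y = t
      rw [← hvs, hveq, Category.assoc, Category.assoc, e]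
end

section
/- In a summable category, if f0, f1, f2 ∈ L(X,Y) are such that (f0,f1) is summable and (f0+f1, f2) is summable, then (f1,f2) is summable, (f0, f1+f2) is summable, and (f0+f1)+f2 = f0+(f1+f2). -/
open CategoryTheory Limits

universe v u

variable {L : Type u} [Category.{v} L] [HasZeroMorphisms L]

/-- In a summable category: if `(f0,f1)` is summable with sum `s` and `(s,f2)`
is summable with sum `t`, then `(f1,f2)` is summable with a sum `u`,
`(f0,u)` is summable, and `(f0+f1)+f2 = f0+(f1+f2)`. -/
theorem stmt5 (Q : SummabilityStructure L) {X Y : L}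
    (f0 f1 f2 s t : X ⟶ Y)
    (h01 : Q.toPreSummability.IsSum f0 f1 s)
    (h : Q.toPreSummability.IsSum s f2 t) :
    ∃ u : X ⟶ Y,
      Q.toPreSummability.IsSum f1 f2 u ∧
      Q.toPreSummability.IsSum f0 u t := by
  classical
  obtain ⟨w01, ⟨hw0, hw1⟩, hws⟩ := h01
  obtain ⟨w, ⟨hwa, hwb⟩, hwt⟩ := h
  -- witness of (f2, 0) with sum f2
  obtain ⟨a, ⟨ha0, ha1⟩, has⟩ := Q.ax_zero f2
  -- flip at Y
  obtain ⟨cY, ⟨hc0, hc1⟩, hcs⟩ := Q.ax_com Y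
  simp only [Functor.id_obj] at hc0 hc1
  -- witness of (0, f2) with sum f2
  set w2 : X ⟶ Q.S.obj Y := a ≫ cY with hw2def
  have hw2p0 : w2 ≫ Q.p0.app Y = 0 := by
    rw [hw2def, Category.assoc, hc0, ha1]
  have hw2p1 : w2 ≫ Q.p1.app Y = f2 := by
    rw [hw2def, Category.assoc, hc1, ha0]
  have hw2s : w2 ≫ Q.sg.app Y = f2 := by
    rw [hw2def, Category.assoc, hcs, has]
  -- (w01, w2) is summable since (s, f2) is
  obtain ⟨W, hW0, hW1⟩ := Q.ax_wit w01 w2 (by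
    rw [hws, hw2s]; exact ⟨w, hwa, hwb⟩)
  -- construct the flip c : S(SY) ⟶ S(SY)
  have hσ0 : Q.S.map (Q.p0.app Y) ≫ Q.sg.app Y =
      Q.sg.app (Q.S.obj Y) ≫ Q.p0.app Y := by
    simpa using Q.sg.naturality (Q.p0.app Y)
  have hσ1 : Q.S.map (Q.p1.app Y) ≫ Q.sg.app Y =
      Q.sg.app (Q.S.obj Y) ≫ Q.p1.app Y := by
    simpa using Q.sg.naturality (Q.p1.app Y)
  obtain ⟨c, hcp0, hcp1⟩ := Q.ax_wit (Q.S.map (Q.p0.app Y)) (Q.S.map (Q.p1.app Y))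
    ⟨Q.sg.app (Q.S.obj Y), by simp only [Functor.id_obj]; rw [hσ0], by
      simp only [Functor.id_obj]; rw [hσ1]⟩
  simp only [Functor.id_obj] at hcp0 hcp1
  -- naturality facts for p0, p1
  have hn00 : Q.S.map (Q.p0.app Y) ≫ Q.p0.app Y =
      Q.p0.app (Q.S.obj Y) ≫ Q.p0.app Y := by
    simpa using Q.p0.naturality (Q.p0.app Y)
  have hn01 : Q.S.map (Q.p0.app Y) ≫ Q.p1.app Y =
      Q.p1.app (Q.S.obj Y) ≫ Q.p0.app Y := by
    simpa using Q.p1.naturality (Q.p0.app Y)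
  have hn10 : Q.S.map (Q.p1.app Y) ≫ Q.p0.app Y =
      Q.p0.app (Q.S.obj Y) ≫ Q.p1.app Y := by
    simpa using Q.p0.naturality (Q.p1.app Y)
  have hn11 : Q.S.map (Q.p1.app Y) ≫ Q.p1.app Y =
      Q.p1.app (Q.S.obj Y) ≫ Q.p1.app Y := by
    simpa using Q.p1.naturality (Q.p1.app Y)
  -- the flip equations for c, hence c ≫ S σ = σ
  have hass : c ≫ Q.S.map (Q.sg.app Y) = Q.sg.app (Q.S.obj Y) := by
    apply Q.ax_ass Y c
    · rw [← Category.assoc, hcp0, hn00]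
    · rw [← Category.assoc, hcp0, hn01]
    · rw [← Category.assoc, hcp1, hn10]
    · rw [← Category.assoc, hcp1, hn11]
  -- v1 := W ≫ S π1 witnesses (f1, f2)
  set v1 : X ⟶ Q.S.obj Y := W ≫ Q.S.map (Q.p1.app Y) with hv1def
  have hv1p0 : v1 ≫ Q.p0.app Y = f1 := by
    rw [hv1def, Category.assoc, hn10, ← Category.assoc, hW0, hw1]
  have hv1p1 : v1 ≫ Q.p1.app Y = f2 := by
    rw [hv1def, Category.assoc, hn11, ← Category.assoc, hW1, hw2p1]
  set u : X ⟶ Y := v1 ≫ Q.sg.app Y with hudef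
  -- v0 := W ≫ S π0 witnesses (f0, 0), so its sum is f0
  set v0 : X ⟶ Q.S.obj Y := W ≫ Q.S.map (Q.p0.app Y) with hv0def
  have hv0p0 : v0 ≫ Q.p0.app Y = f0 := by
    rw [hv0def, Category.assoc, hn00, ← Category.assoc, hW0, hw0]
  have hv0p1 : v0 ≫ Q.p1.app Y = 0 := by
    rw [hv0def, Category.assoc, hn01, ← Category.assoc, hW1, hw2p0]
  obtain ⟨a0, ⟨ha00, ha01⟩, ha0s⟩ := Q.ax_zero f0
  have hv0a0 : v0 = a0 := Q.jointly_monic v0 a0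
    (by rw [hv0p0, ha00]) (by rw [hv0p1, ha01])
  have hv0s : v0 ≫ Q.sg.app Y = f0 := by rw [hv0a0, ha0s]
  -- W ≫ S σ is the witness of (s, f2), hence equal to w
  have hσσ : Q.S.map (Q.sg.app Y) ≫ Q.sg.app Y =
      Q.sg.app (Q.S.obj Y) ≫ Q.sg.app Y := by
    simpa using Q.sg.naturality (Q.sg.app Y)
  have hnσ0 : Q.S.map (Q.sg.app Y) ≫ Q.p0.app Y =
      Q.p0.app (Q.S.obj Y) ≫ Q.sg.app Y := by
    simpa using Q.p0.naturality (Q.sg.app Y)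
  have hnσ1 : Q.S.map (Q.sg.app Y) ≫ Q.p1.app Y =
      Q.p1.app (Q.S.obj Y) ≫ Q.sg.app Y := by
    simpa using Q.p1.naturality (Q.sg.app Y)
  have hWσw : W ≫ Q.S.map (Q.sg.app Y) = w := by
    apply Q.jointly_monic
    all_goals simp only [Functor.id_obj]
    · rw [Category.assoc, hnσ0, ← Category.assoc, hW0, hws, hwa]
    · rw [Category.assoc, hnσ1, ← Category.assoc, hW1, hw2s, hwb]
  -- key: t = W ≫ σ_{SY} ≫ σ_Y
  have ht : (W ≫ Q.sg.app (Q.S.obj Y)) ≫ Q.sg.app Y = t := by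
    rw [Category.assoc, ← hσσ, ← Category.assoc, hWσw, hwt]
  -- the witness of (f0, u) with sum t is W ≫ σ_{SY} = W ≫ c ≫ S σ
  have hWc : W ≫ Q.sg.app (Q.S.obj Y) = (W ≫ c) ≫ Q.S.map (Q.sg.app Y) := by
    rw [Category.assoc, hass]
  refine ⟨u, ⟨v1, ⟨hv1p0, hv1p1⟩, rfl⟩,
    ⟨W ≫ Q.sg.app (Q.S.obj Y), ⟨?_, ?_⟩, ht⟩⟩
  · rw [hWc]
    simp only [Category.assoc]
    rw [hnσ0, reassoc_of% hcp0, ← Category.assoc, ← hv0def, hv0s]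
  · rw [hWc]
    simp only [Category.assoc]
    rw [hnσ1, reassoc_of% hcp1, ← Category.assoc, ← hv1def, ← hudef]
end

section
/- In a summable category, a finite family of morphisms (f_i)_{i=1}^n in L(X,Y) is summable if and only if for every permutation p of {1,…,n} the permuted family (f_{p(i)})_{i=1}^n is summable, and in that case the sums coincide. -/
open CategoryTheory Limits

universe v u

variable {L : Type u} [Category.{v} L] [HasZeroMorphisms L]

/-- `IsSumList P l s`: the finite family (list) `l` is summable with sum `s`,
defined inductively: the empty family has sum 0; `l ++ [f]` is summable with
sum `t` if `l` is summable with a sum `s'` and `(s', f)` is summable with sum `t`. -/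
inductive IsSumList (P : PreSummability L) : ∀ {X Y : L}, List (X ⟶ Y) → (X ⟶ Y) → Prop
  | nil {X Y : L} : IsSumList P ([] : List (X ⟶ Y)) 0
  | snoc {X Y : L} (l : List (X ⟶ Y)) (s f t : X ⟶ Y) :
      IsSumList P l s → P.IsSum s f t → IsSumList P (l ++ [f]) t

section Aux

theorem SumAux.wit_unique (P : PreSummability L) {X Y : L} {f0 f1 : X ⟶ Y}
    {w w' : X ⟶ P.S.obj Y} (h : P.IsWitness f0 f1 w) (h' : P.IsWitness f0 f1 w') : w = w' :=
  P.jointly_monic w w' (h.1.trans h'.1.symm) (h.2.trans h'.2.symm)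

theorem SumAux.sum_unique (P : PreSummability L) {X Y : L} {f0 f1 s s' : X ⟶ Y}
    (h : P.IsSum f0 f1 s) (h' : P.IsSum f0 f1 s') : s = s' := by
  obtain ⟨w, hw, hs⟩ := h
  obtain ⟨w', hw', hs'⟩ := h'
  rw [← hs, ← hs', SumAux.wit_unique P hw hw']

theorem SumAux.comm (Q : SummabilityStructure L) {X Y : L} {f0 f1 s : X ⟶ Y}
    (h : Q.toPreSummability.IsSum f0 f1 s) : Q.toPreSummability.IsSum f1 f0 s := by
  obtain ⟨w, ⟨h0, h1⟩, hs⟩ := h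
  obtain ⟨wc, ⟨hc0, hc1⟩, hcs⟩ := Q.ax_com Y
  exact ⟨w ≫ wc,
    ⟨by rw [Category.assoc, show wc ≫ Q.p0.app Y = Q.p1.app Y from hc0, h1],
      by rw [Category.assoc, show wc ≫ Q.p1.app Y = Q.p0.app Y from hc1, h0]⟩,
    by rw [Category.assoc, hcs, hs]⟩

theorem SumAux.zero_left (Q : SummabilityStructure L) {X Y : L} (f : X ⟶ Y) :
    Q.toPreSummability.IsSum 0 f f :=
  SumAux.comm Q (Q.ax_zero f)

theorem SumAux.assoc (Q : SummabilityStructure L) {X Y : L} {f0 f1 f2 s t : X ⟶ Y}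
    (h01 : Q.toPreSummability.IsSum f0 f1 s) (h : Q.toPreSummability.IsSum s f2 t) :
    ∃ u, Q.toPreSummability.IsSum f1 f2 u ∧ Q.toPreSummability.IsSum f0 u t := by
  obtain ⟨w01, hw01, hs⟩ := h01
  obtain ⟨w, hw, ht⟩ := h
  obtain ⟨z, hz, hzs⟩ := SumAux.zero_left Q f2
  -- a double witness W with rows w01 and z
  obtain ⟨W, hW0, hW1⟩ := Q.ax_wit w01 z
    ⟨w, hw.1.trans hs.symm, hw.2.trans hzs.symm⟩
  -- naturality helpers
  have n00 : Q.S.map (Q.p0.app Y) ≫ Q.p0.app Y = Q.p0.app (Q.S.obj Y) ≫ Q.p0.app Y := by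
    simpa using Q.p0.naturality (Q.p0.app Y)
  have n01 : Q.S.map (Q.p1.app Y) ≫ Q.p0.app Y = Q.p0.app (Q.S.obj Y) ≫ Q.p1.app Y := by
    simpa using Q.p0.naturality (Q.p1.app Y)
  have n10 : Q.S.map (Q.p0.app Y) ≫ Q.p1.app Y = Q.p1.app (Q.S.obj Y) ≫ Q.p0.app Y := by
    simpa using Q.p1.naturality (Q.p0.app Y)
  have n11 : Q.S.map (Q.p1.app Y) ≫ Q.p1.app Y = Q.p1.app (Q.S.obj Y) ≫ Q.p1.app Y := by
    simpa using Q.p1.naturality (Q.p1.app Y)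
  have ns0 : Q.S.map (Q.p0.app Y) ≫ Q.sg.app Y = Q.sg.app (Q.S.obj Y) ≫ Q.p0.app Y := by
    simpa using Q.sg.naturality (Q.p0.app Y)
  have ns1 : Q.S.map (Q.p1.app Y) ≫ Q.sg.app Y = Q.sg.app (Q.S.obj Y) ≫ Q.p1.app Y := by
    simpa using Q.sg.naturality (Q.p1.app Y)
  have nsg0 : Q.S.map (Q.sg.app Y) ≫ Q.p0.app Y = Q.p0.app (Q.S.obj Y) ≫ Q.sg.app Y := by
    simpa using Q.p0.naturality (Q.sg.app Y)
  have nsg1 : Q.S.map (Q.sg.app Y) ≫ Q.p1.app Y = Q.p1.app (Q.S.obj Y) ≫ Q.sg.app Y := by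
    simpa using Q.p1.naturality (Q.sg.app Y)
  have nsgs : Q.S.map (Q.sg.app Y) ≫ Q.sg.app Y = Q.sg.app (Q.S.obj Y) ≫ Q.sg.app Y := by
    simpa using Q.sg.naturality (Q.sg.app Y)
  -- W ≫ S σ is a witness of (s, f2), hence equals w
  have hWσ : W ≫ Q.S.map (Q.sg.app Y) = w := by
    refine SumAux.wit_unique Q.toPreSummability (f0 := s) (f1 := f2) ?_ hw
    constructor
    · rw [Category.assoc, nsg0, ← Category.assoc, hW0, hs]
    · rw [Category.assoc, nsg1, ← Category.assoc, hW1, hzs]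
  -- total sum via the other grouping
  have htot : W ≫ Q.sg.app (Q.S.obj Y) ≫ Q.sg.app Y = t := by
    rw [← nsgs, ← Category.assoc, hWσ, ht]
  -- witness of (f1, f2)
  have hwu : Q.toPreSummability.IsWitness f1 f2 (W ≫ Q.S.map (Q.p1.app Y)) := by
    constructor
    · rw [Category.assoc, n01, ← Category.assoc, hW0, hw01.2]
    · rw [Category.assoc, n11, ← Category.assoc, hW1, hz.2]
  set u : X ⟶ Y := (W ≫ Q.S.map (Q.p1.app Y)) ≫ Q.sg.app Y with hu
  have hsum_u : Q.toPreSummability.IsSum f1 f2 u := ⟨_, hwu, rfl⟩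
  -- witness of (f0, 0), whose sum is f0
  have hw0' : Q.toPreSummability.IsWitness f0 0 (W ≫ Q.S.map (Q.p0.app Y)) := by
    constructor
    · rw [Category.assoc, n00, ← Category.assoc, hW0, hw01.1]
    · rw [Category.assoc, n10, ← Category.assoc, hW1, hz.1]
  have hf0 : (W ≫ Q.S.map (Q.p0.app Y)) ≫ Q.sg.app Y = f0 :=
    SumAux.sum_unique Q.toPreSummability ⟨_, hw0', rfl⟩ (Q.ax_zero f0)
  refine ⟨u, hsum_u, W ≫ Q.sg.app (Q.S.obj Y), ⟨?_, ?_⟩, ?_⟩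
  · rw [Category.assoc, ← ns0, ← Category.assoc]; exact hf0
  · rw [Category.assoc, ← ns1, ← Category.assoc]
  · rw [Category.assoc]; exact htot

/-- Left version: `t = (f0 + f1) + f2` gives `t = (f0 + f2) + f1`. -/
theorem SumAux.assoc' (Q : SummabilityStructure L) {X Y : L} {f0 f1 f2 s t : X ⟶ Y}
    (h01 : Q.toPreSummability.IsSum f0 f1 s) (h : Q.toPreSummability.IsSum s f2 t) :
    ∃ u, Q.toPreSummability.IsSum f0 f2 u ∧ Q.toPreSummability.IsSum u f1 t := by
  obtain ⟨u, hu1, hu2⟩ := SumAux.assoc Q (SumAux.comm Q h01) h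
  exact ⟨u, hu1, SumAux.comm Q hu2⟩

theorem SumAux.nil_inv (P : PreSummability L) {X Y : L} {l : List (X ⟶ Y)} {s : X ⟶ Y}
    (h : IsSumList P l s) (he : l = []) : s = 0 := by
  induction h with
  | nil => rfl
  | snoc l s f t h1 h2 ih => exact absurd he (by simp)

theorem SumAux.cons_mk (Q : SummabilityStructure L) {X Y : L} {l : List (X ⟶ Y)}
    {s : X ⟶ Y} (h : IsSumList Q.toPreSummability l s) :
    ∀ {f t : X ⟶ Y}, Q.toPreSummability.IsSum f s t →
      IsSumList Q.toPreSummability (f :: l) t := by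
  induction h with
  | nil =>
    intro f t hf
    have ht : t = f := SumAux.sum_unique Q.toPreSummability hf (Q.ax_zero f)
    rw [ht]
    have h4 := IsSumList.snoc [] 0 f f IsSumList.nil (SumAux.zero_left Q f)
    simpa using h4
  | snoc l1 s1 g s h1 h2 ih =>
    intro f t hf
    -- h2 : IsSum s1 g s, hf : IsSum f s t
    obtain ⟨v, hv1, hv2⟩ := SumAux.assoc Q (SumAux.comm Q h2) (SumAux.comm Q hf)
    -- hv1 : IsSum s1 f v, hv2 : IsSum g v t
    have h3 : IsSumList Q.toPreSummability (f :: l1) v := ih (SumAux.comm Q hv1)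
    have := IsSumList.snoc (f :: l1) v g t h3 (SumAux.comm Q hv2)
    simpa using this

theorem SumAux.cons_inv (Q : SummabilityStructure L) {X Y : L} {l0 : List (X ⟶ Y)}
    {t : X ⟶ Y} (h : IsSumList Q.toPreSummability l0 t) :
    ∀ (f : X ⟶ Y) (l : List (X ⟶ Y)), l0 = f :: l →
      ∃ s, IsSumList Q.toPreSummability l s ∧ Q.toPreSummability.IsSum f s t := by
  induction h with
  | nil => intro f l he; exact absurd he (by simp)
  | snoc l1 s1 g t h1 h2 ih =>
    intro f l he
    cases l1 with
    | nil =>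
      simp only [List.nil_append, List.cons.injEq] at he
      obtain ⟨hgf, rfl⟩ := he
      have hs1 : s1 = 0 := SumAux.nil_inv Q.toPreSummability h1 rfl
      rw [hs1] at h2
      have ht : t = g := SumAux.sum_unique Q.toPreSummability h2 (SumAux.zero_left Q g)
      rw [ht, ← hgf]
      exact ⟨0, IsSumList.nil, Q.ax_zero g⟩
    | cons a l1' =>
      simp only [List.cons_append, List.cons.injEq] at he
      obtain ⟨rfl, rfl⟩ := he
      obtain ⟨s2, hs2, ha⟩ := ih a l1' rfl
      -- ha : IsSum a s2 s1, h2 : IsSum s1 g t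
      obtain ⟨v, hv1, hv2⟩ := SumAux.assoc Q ha h2
      exact ⟨v, IsSumList.snoc l1' s2 g v hs2 hv1, hv2⟩

theorem SumAux.list_unique (Q : SummabilityStructure L) {X Y : L} {l : List (X ⟶ Y)}
    {s s' : X ⟶ Y} (h : IsSumList Q.toPreSummability l s)
    (h' : IsSumList Q.toPreSummability l s') : s = s' := by
  induction l generalizing s s' with
  | nil => rw [SumAux.nil_inv _ h rfl, SumAux.nil_inv _ h' rfl]
  | cons f l ih =>
    obtain ⟨u, hu, hfu⟩ := SumAux.cons_inv Q h f l rfl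
    obtain ⟨u', hu', hfu'⟩ := SumAux.cons_inv Q h' f l rfl
    have : u = u' := ih hu hu'
    subst this
    exact SumAux.sum_unique Q.toPreSummability hfu hfu'

theorem SumAux.perm (Q : SummabilityStructure L) {X Y : L} {l l' : List (X ⟶ Y)}
    (hp : l.Perm l') : ∀ {s : X ⟶ Y}, IsSumList Q.toPreSummability l s →
      IsSumList Q.toPreSummability l' s := by
  induction hp with
  | nil => exact fun h => h
  | cons x h ih =>
    intro s hs
    obtain ⟨u, hu, hx⟩ := SumAux.cons_inv Q hs x _ rfl
    exact SumAux.cons_mk Q (ih hu) hx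
  | swap x y l =>
    intro s hs
    obtain ⟨s1, h1, hy⟩ := SumAux.cons_inv Q hs y _ rfl
    obtain ⟨s0, h0, hx⟩ := SumAux.cons_inv Q h1 x _ rfl
    -- hy : IsSum y s1 s, hx : IsSum x s0 s1
    obtain ⟨u, hu1, hu2⟩ := SumAux.assoc Q hx (SumAux.comm Q hy)
    -- hu1 : IsSum s0 y u, hu2 : IsSum x u s
    exact SumAux.cons_mk Q (SumAux.cons_mk Q h0 (SumAux.comm Q hu1)) hu2
  | trans h1 h2 ih1 ih2 => exact fun hs => ih2 (ih1 hs)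

end Aux

/-- In a summable category, a finite family is summable iff any permutation of
it is summable, and in that case the sums coincide. -/
theorem stmt6 (Q : SummabilityStructure L) {X Y : L}
    (l l' : List (X ⟶ Y)) (hp : l.Perm l') :
    ((∃ s, IsSumList Q.toPreSummability l s) ↔
      (∃ s, IsSumList Q.toPreSummability l' s)) ∧
    (∀ s s', IsSumList Q.toPreSummability l s →
      IsSumList Q.toPreSummability l' s' → s = s') := by
  constructor
  · exact ⟨fun ⟨s, h⟩ => ⟨s, SumAux.perm Q hp h⟩, fun ⟨s, h⟩ => ⟨s, SumAux.perm Q hp.symm h⟩⟩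
  · intro s s' h h'
    exact SumAux.list_unique Q (SumAux.perm Q hp h) h'
end

section
/- In a summable category, a family (f_i)_{i∈I} in L(X,Y) is summable iff for any partition of I into pairwise disjoint sets (I_j)_{j∈J}: each restricted family (f_i)_{i∈I_j} is summable, and the family (Σ_{i∈I_j} f_i)_{j∈J} is summable; and then Σ_{i∈I} f_i = Σ_{j∈J} Σ_{i∈I_j} f_i. -/
open CategoryTheory Limits

universe v u

variable {L : Type u} [Category.{v} L] [HasZeroMorphisms L]

section Aux

variable (Q : SummabilityStructure L) {X Y : L}

lemma aux_witness_unique {f0 f1 : X ⟶ Y} {w w' : X ⟶ Q.S.obj Y}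
    (h : Q.toPreSummability.IsWitness f0 f1 w)
    (h' : Q.toPreSummability.IsWitness f0 f1 w') : w = w' :=
  Q.jointly_monic w w' (h.1.trans h'.1.symm) (h.2.trans h'.2.symm)

lemma aux_sum_unique {f g s s' : X ⟶ Y} (h : Q.toPreSummability.IsSum f g s)
    (h' : Q.toPreSummability.IsSum f g s') : s = s' := by
  obtain ⟨w, hw, hws⟩ := h
  obtain ⟨w', hw', hws'⟩ := h'
  rw [← hws, ← hws', aux_witness_unique Q hw hw']

lemma aux_comm {f g s : X ⟶ Y} (h : Q.toPreSummability.IsSum f g s) :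
    Q.toPreSummability.IsSum g f s := by
  obtain ⟨w, ⟨hw0, hw1⟩, hws⟩ := h
  obtain ⟨c, ⟨hc0, hc1⟩, hcs⟩ := Q.ax_com Y
  refine ⟨w ≫ c, ⟨?_, ?_⟩, ?_⟩ <;> rw [Category.assoc]
  · erw [hc0]; exact hw1
  · erw [hc1]; exact hw0
  · rw [hcs, hws]

lemma aux_zero_left (f : X ⟶ Y) : Q.toPreSummability.IsSum 0 f f :=
  aux_comm Q (Q.ax_zero f)

/-- Key associativity consequence, derived from `ax_wit` and naturality. -/
lemma aux_assoc' {f g h s t : X ⟶ Y} (h1 : Q.toPreSummability.IsSum f g s)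
    (h2 : Q.toPreSummability.IsSum s h t) :
    ∃ u, Q.toPreSummability.IsSum f h u ∧ Q.toPreSummability.IsSum u g t := by
  obtain ⟨w, ⟨hw0, hw1⟩, hws⟩ := h1
  obtain ⟨v, ⟨hv0, hv1⟩, hvs⟩ := h2
  obtain ⟨z, ⟨hz0, hz1⟩, hzs⟩ := Q.ax_zero h
  have nat0 : ∀ {A B : L} (k : A ⟶ B), Q.S.map k ≫ Q.p0.app B = Q.p0.app A ≫ k := by
    intro A B k; simpa using Q.p0.naturality k
  have nat1 : ∀ {A B : L} (k : A ⟶ B), Q.S.map k ≫ Q.p1.app B = Q.p1.app A ≫ k := by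
    intro A B k; simpa using Q.p1.naturality k
  have nats : ∀ {A B : L} (k : A ⟶ B), Q.S.map k ≫ Q.sg.app B = Q.sg.app A ≫ k := by
    intro A B k; simpa using Q.sg.naturality k
  -- a two-level witness u with components w and z
  obtain ⟨u, hu0, hu1⟩ := Q.ax_wit w z ⟨v, by rw [hws]; exact hv0, by rw [hzs]; exact hv1⟩
  -- u ≫ S.map σ is a witness of (s, h), hence equal to v
  have huv : u ≫ Q.S.map (Q.sg.app Y) = v := by
    apply aux_witness_unique Q (f0 := s) (f1 := h) _ ⟨hv0, hv1⟩
    constructor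
    · erw [Category.assoc, nat0, ← Category.assoc, hu0, hws]
    · erw [Category.assoc, nat1, ← Category.assoc, hu1, hzs]
  -- x1 witnesses (f, h)
  have hx1 : Q.toPreSummability.IsWitness f h (u ≫ Q.S.map (Q.p0.app Y)) := by
    constructor
    · erw [Category.assoc, nat0, ← Category.assoc, hu0, hw0]
    · erw [Category.assoc, nat1, ← Category.assoc, hu1, hz0]
  -- x2 witnesses (g, 0)
  have hx2 : Q.toPreSummability.IsWitness g 0 (u ≫ Q.S.map (Q.p1.app Y)) := by
    constructor
    · erw [Category.assoc, nat0, ← Category.assoc, hu0, hw1]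
    · erw [Category.assoc, nat1, ← Category.assoc, hu1, hz1]
  -- hence x2 ≫ σ = g
  have hx2s : (u ≫ Q.S.map (Q.p1.app Y)) ≫ Q.sg.app Y = g := by
    obtain ⟨zg, hzg, hzgs⟩ := Q.ax_zero g
    rw [aux_witness_unique Q hx2 hzg, hzgs]
  refine ⟨(u ≫ Q.S.map (Q.p0.app Y)) ≫ Q.sg.app Y,
    ⟨u ≫ Q.S.map (Q.p0.app Y), hx1, by simp⟩,
    ⟨u ≫ Q.sg.app (Q.S.obj Y), ⟨?_, ?_⟩, ?_⟩⟩
  · erw [Category.assoc, Category.assoc, ← nats, ← Category.assoc]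
  · erw [Category.assoc, ← nats, ← Category.assoc]; exact hx2s
  · erw [Category.assoc, ← nats, ← Category.assoc, huv]; exact hvs

/-- the other mixed associativity: regroup `(f+g)+h` as `f+(g+h)`. -/
lemma aux_assoc {f g h s t : X ⟶ Y} (h1 : Q.toPreSummability.IsSum f g s)
    (h2 : Q.toPreSummability.IsSum s h t) :
    ∃ u, Q.toPreSummability.IsSum g h u ∧ Q.toPreSummability.IsSum f u t := by
  obtain ⟨u, hu1, hu2⟩ := aux_assoc' Q (aux_comm Q h1) h2
  exact ⟨u, hu1, aux_comm Q hu2⟩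

lemma aux_isSumList_cases {m : List (X ⟶ Y)} {t : X ⟶ Y}
    (h : IsSumList Q.toPreSummability m t) :
    (m = [] ∧ t = 0) ∨ ∃ l f s, m = l ++ [f] ∧ IsSumList Q.toPreSummability l s ∧
      Q.toPreSummability.IsSum s f t := by
  cases h with
  | nil => exact Or.inl ⟨rfl, rfl⟩
  | snoc l s f t hl hs => exact Or.inr ⟨l, f, s, rfl, hl, hs⟩

lemma aux_isSumList_nil {t : X ⟶ Y} (h : IsSumList Q.toPreSummability [] t) : t = 0 := by
  rcases aux_isSumList_cases Q h with ⟨_, ht⟩ | ⟨l, f, s, hm, _, _⟩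
  · exact ht
  · exact absurd hm.symm (by simp)

lemma aux_isSumList_snoc_inv {l : List (X ⟶ Y)} {f t : X ⟶ Y}
    (h : IsSumList Q.toPreSummability (l ++ [f]) t) :
    ∃ s, IsSumList Q.toPreSummability l s ∧ Q.toPreSummability.IsSum s f t := by
  rcases aux_isSumList_cases Q h with ⟨hm, _⟩ | ⟨l', f', s, hm, hl', hs⟩
  · exact absurd hm (by simp)
  · obtain ⟨hl, hf⟩ := List.append_inj' hm.symm rfl
    obtain rfl := hl
    obtain rfl : f' = f := by simpa using hf
    exact ⟨s, hl', hs⟩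

lemma aux_isSumList_unique {l : List (X ⟶ Y)} {s : X ⟶ Y}
    (h : IsSumList Q.toPreSummability l s) :
    ∀ {s' : X ⟶ Y}, IsSumList Q.toPreSummability l s' → s = s' := by
  induction h with
  | nil => exact fun h' => (aux_isSumList_nil Q h').symm
  | snoc l₀ s₀ f t₀ hl₀ hs₀ ih =>
    intro s' h'
    obtain ⟨s₁, hl₁, hs₁⟩ := aux_isSumList_snoc_inv Q h'
    obtain rfl := ih hl₁
    exact aux_sum_unique Q hs₀ hs₁

lemma aux_isSumList_append {l1 l2 : List (X ⟶ Y)} {t : X ⟶ Y} :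
    IsSumList Q.toPreSummability (l1 ++ l2) t ↔
      ∃ s1 s2, IsSumList Q.toPreSummability l1 s1 ∧ IsSumList Q.toPreSummability l2 s2 ∧
        Q.toPreSummability.IsSum s1 s2 t := by
  induction l2 using List.reverseRecOn generalizing t with
  | nil =>
    constructor
    · intro h
      exact ⟨t, 0, by simpa using h, IsSumList.nil, Q.ax_zero t⟩
    · rintro ⟨s1, s2, h1, h2, hs⟩
      obtain rfl := aux_isSumList_nil Q h2
      obtain rfl := aux_sum_unique Q (Q.ax_zero s1) (by exact hs)
      simpa using h1
  | append_singleton l2' f ih =>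
    constructor
    · intro h
      rw [← List.append_assoc] at h
      obtain ⟨s, hls, hsf⟩ := aux_isSumList_snoc_inv Q h
      obtain ⟨s1, s2', h1, h2', hs⟩ := ih.mp hls
      obtain ⟨u, hu1, hu2⟩ := aux_assoc Q hs hsf
      exact ⟨s1, u, h1, IsSumList.snoc _ _ _ _ h2' hu1, hu2⟩
    · rintro ⟨s1, s2, h1, h2, hs⟩
      obtain ⟨s2', h2', hs2'⟩ := aux_isSumList_snoc_inv Q h2
      -- s2 = s2' + f, t = s1 + s2 ; want (s1 + s2') + f = t
      obtain ⟨u, hu1, hu2⟩ := aux_assoc' Q hs2' (aux_comm Q hs)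
      -- hu1 : IsSum s2' s1 u, hu2 : IsSum u f t
      rw [← List.append_assoc]
      exact IsSumList.snoc _ _ _ _ (ih.mpr ⟨s1, s2', h1, h2', aux_comm Q hu1⟩) hu2

lemma aux_isSumList_singleton {f s : X ⟶ Y} :
    IsSumList Q.toPreSummability [f] s ↔ s = f := by
  constructor
  · intro h
    obtain ⟨s0, h0, hs⟩ := aux_isSumList_snoc_inv Q (show IsSumList _ ([] ++ [f]) s from h)
    obtain rfl := aux_isSumList_nil Q h0
    exact aux_sum_unique Q hs (aux_zero_left Q f)
  · rintro rfl
    exact IsSumList.snoc [] 0 _ _ IsSumList.nil (aux_zero_left Q _)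

lemma aux_isSumList_cons {f : X ⟶ Y} {l : List (X ⟶ Y)} {t : X ⟶ Y} :
    IsSumList Q.toPreSummability (f :: l) t ↔
      ∃ s, IsSumList Q.toPreSummability l s ∧ Q.toPreSummability.IsSum f s t := by
  have : f :: l = [f] ++ l := rfl
  rw [this, aux_isSumList_append Q]
  constructor
  · rintro ⟨s1, s2, h1, h2, hs⟩
    obtain rfl := (aux_isSumList_singleton Q).mp h1
    exact ⟨s2, h2, hs⟩
  · rintro ⟨s, hl, hs⟩
    exact ⟨f, s, (aux_isSumList_singleton Q).mpr rfl, hl, hs⟩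

lemma aux_isSumList_perm {l l' : List (X ⟶ Y)} (hp : l.Perm l') {s : X ⟶ Y}
    (h : IsSumList Q.toPreSummability l s) : IsSumList Q.toPreSummability l' s := by
  induction hp generalizing s with
  | nil => exact h
  | cons x p ih =>
    obtain ⟨a, hl, hs⟩ := (aux_isSumList_cons Q).mp h
    exact (aux_isSumList_cons Q).mpr ⟨a, ih hl, hs⟩
  | swap x y l =>
    obtain ⟨a, hxl, hya⟩ := (aux_isSumList_cons Q).mp h
    obtain ⟨b, hl, hxb⟩ := (aux_isSumList_cons Q).mp hxl
    -- have x + b = a, y + a = s ; want y + b = v, x + v = s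
    obtain ⟨q, hq1, hq2⟩ := aux_assoc' Q hxb (aux_comm Q hya)
    -- hq1 : IsSum x y q, hq2 : IsSum q b s
    obtain ⟨v, hv1, hv2⟩ := aux_assoc Q hq1 hq2
    -- hv1 : IsSum y b v, hv2 : IsSum x v s
    exact (aux_isSumList_cons Q).mpr ⟨v, (aux_isSumList_cons Q).mpr ⟨b, hl, hv1⟩, hv2⟩
  | trans p1 p2 ih1 ih2 => exact ih2 (ih1 h)

lemma aux_isSumList_flatten_of {blocks : List (List (X ⟶ Y))} {sums : List (X ⟶ Y)}
    {t : X ⟶ Y} (hf : List.Forall₂ (IsSumList Q.toPreSummability) blocks sums)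
    (ht : IsSumList Q.toPreSummability sums t) :
    IsSumList Q.toPreSummability blocks.flatten t := by
  induction hf generalizing t with
  | nil =>
    obtain rfl := aux_isSumList_nil Q ht
    exact IsSumList.nil
  | @cons b sb bs sbs hb hbs ih =>
    obtain ⟨v, hv, hsv⟩ := (aux_isSumList_cons Q).mp ht
    rw [List.flatten_cons]
    exact (aux_isSumList_append Q).mpr ⟨sb, v, hb, ih hv, hsv⟩

lemma aux_isSumList_flatten_to {blocks : List (List (X ⟶ Y))} {t : X ⟶ Y}
    (h : IsSumList Q.toPreSummability blocks.flatten t) :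
    ∃ sums, List.Forall₂ (IsSumList Q.toPreSummability) blocks sums ∧
      IsSumList Q.toPreSummability sums t := by
  induction blocks generalizing t with
  | nil =>
    obtain rfl := aux_isSumList_nil Q (by simpa using h)
    exact ⟨[], List.Forall₂.nil, IsSumList.nil⟩
  | cons b bs ih =>
    rw [List.flatten_cons] at h
    obtain ⟨s1, s2, h1, h2, hs⟩ := (aux_isSumList_append Q).mp h
    obtain ⟨sums', hf', ht'⟩ := ih h2
    exact ⟨s1 :: sums', List.Forall₂.cons h1 hf',
      (aux_isSumList_cons Q).mpr ⟨s2, ht', hs⟩⟩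

end Aux

/-- In a summable category, a family is summable iff, for any partition of it
into blocks, each block is summable and the family of block sums is summable;
and then the total sums agree. Partitions of a finite family are rendered as a
list of blocks whose concatenation is a permutation of the family. -/
theorem stmt7 (Q : SummabilityStructure L) {X Y : L}
    (l : List (X ⟶ Y)) (blocks : List (List (X ⟶ Y))) (hp : l.Perm blocks.flatten) :
    ((∃ s, IsSumList Q.toPreSummability l s) ↔
      (∃ (sums : List (X ⟶ Y)) (t : X ⟶ Y),
        List.Forall₂ (IsSumList Q.toPreSummability) blocks sums ∧
        IsSumList Q.toPreSummability sums t)) ∧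
    (∀ (s : X ⟶ Y) (sums : List (X ⟶ Y)) (t : X ⟶ Y),
      IsSumList Q.toPreSummability l s →
      List.Forall₂ (IsSumList Q.toPreSummability) blocks sums →
      IsSumList Q.toPreSummability sums t → s = t) := by
  constructor
  · constructor
    · rintro ⟨s, hs⟩
      obtain ⟨sums, hf, ht⟩ :=
        aux_isSumList_flatten_to Q (aux_isSumList_perm Q hp hs)
      exact ⟨sums, s, hf, ht⟩
    · rintro ⟨sums, t, hf, ht⟩
      exact ⟨t, aux_isSumList_perm Q hp.symm (aux_isSumList_flatten_of Q hf ht)⟩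
  · intro s sums t hs hf ht
    exact aux_isSumList_unique Q hs
      (aux_isSumList_perm Q hp.symm (aux_isSumList_flatten_of Q hf ht))
end

section
/- In a summable category, if f0, f1 ∈ L(X,Y) are summable then S f0 and S f1 ∈ L(S X, S Y) are summable with witness c ∘ S⟨f0,f1⟩ (where c is the flip on S²Y) and S f0 + S f1 = S(f0+f1). -/
open CategoryTheory Limits

universe v u

variable {L : Type u} [Category.{v} L] [HasZeroMorphisms L]

/-- If `f0, f1` are summable (witness `w`, sum `s`) then `S f0, S f1` are
summable with witness `c ∘ S w` (where `c` is the flip of `S²Y`, characterized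
by π_i∘π_j∘c = π_j∘π_i) and `S f0 + S f1 = S (f0 + f1)`. -/
theorem stmt8 (Q : SummabilityStructure L) {X Y : L} (f0 f1 s : X ⟶ Y)
    (w : X ⟶ Q.S.obj Y) (hw : Q.toPreSummability.IsWitness f0 f1 w)
    (hs : w ≫ Q.sg.app Y = s)
    (c : Q.S.obj (Q.S.obj Y) ⟶ Q.S.obj (Q.S.obj Y))
    (hc00 : c ≫ Q.p0.app (Q.S.obj Y) ≫ Q.p0.app Y = Q.p0.app (Q.S.obj Y) ≫ Q.p0.app Y)
    (hc01 : c ≫ Q.p0.app (Q.S.obj Y) ≫ Q.p1.app Y = Q.p1.app (Q.S.obj Y) ≫ Q.p0.app Y)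
    (hc10 : c ≫ Q.p1.app (Q.S.obj Y) ≫ Q.p0.app Y = Q.p0.app (Q.S.obj Y) ≫ Q.p1.app Y)
    (hc11 : c ≫ Q.p1.app (Q.S.obj Y) ≫ Q.p1.app Y = Q.p1.app (Q.S.obj Y) ≫ Q.p1.app Y) :
    Q.toPreSummability.IsWitness (Q.S.map f0) (Q.S.map f1) (Q.S.map w ≫ c) ∧
    (Q.S.map w ≫ c) ≫ Q.sg.app (Q.S.obj Y) = Q.S.map s := by
  obtain ⟨h0, h1⟩ := hw
  have nat0 : ∀ {A B : L} (g : A ⟶ B), Q.S.map g ≫ Q.p0.app B = Q.p0.app A ≫ g := by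
    intro A B g; simpa using Q.p0.naturality g
  have nat1 : ∀ {A B : L} (g : A ⟶ B), Q.S.map g ≫ Q.p1.app B = Q.p1.app A ≫ g := by
    intro A B g; simpa using Q.p1.naturality g
  have natsg : ∀ {A B : L} (g : A ⟶ B), Q.S.map g ≫ Q.sg.app B = Q.sg.app A ≫ g := by
    intro A B g; simpa using Q.sg.naturality g
  -- c is involutive
  have cc0 : (c ≫ c) ≫ Q.p0.app (Q.S.obj Y) = 𝟙 _ ≫ Q.p0.app (Q.S.obj Y) := by
    apply Q.jointly_monic
    · simp only [Category.assoc, Category.id_comp]; rw [hc00, hc00]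
    · simp only [Category.assoc, Category.id_comp]; rw [hc01, hc10]
  have cc1 : (c ≫ c) ≫ Q.p1.app (Q.S.obj Y) = 𝟙 _ ≫ Q.p1.app (Q.S.obj Y) := by
    apply Q.jointly_monic
    · simp only [Category.assoc, Category.id_comp]; rw [hc10, hc01]
    · simp only [Category.assoc, Category.id_comp]; rw [hc11, hc11]
  have cc : c ≫ c = 𝟙 _ := Q.jointly_monic _ _ cc0 cc1
  have hass := Q.ax_ass Y c hc00 hc01 hc10 hc11
  have hcsg : c ≫ Q.sg.app (Q.S.obj Y) = Q.S.map (Q.sg.app Y) := by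
    calc c ≫ Q.sg.app (Q.S.obj Y) = c ≫ c ≫ Q.S.map (Q.sg.app Y) := by rw [hass]
    _ = (c ≫ c) ≫ Q.S.map (Q.sg.app Y) := by rw [Category.assoc]
    _ = Q.S.map (Q.sg.app Y) := by rw [cc, Category.id_comp]
  refine ⟨⟨?_, ?_⟩, ?_⟩
  · apply Q.jointly_monic
    · rw [Category.assoc, Category.assoc, hc00, ← Category.assoc, nat0 w,
        Category.assoc, h0, nat0 f0]
    · rw [Category.assoc, Category.assoc, hc01, ← Category.assoc, nat1 w,
        Category.assoc, h0, nat1 f0]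
  · apply Q.jointly_monic
    · rw [Category.assoc, Category.assoc, hc10, ← Category.assoc, nat0 w,
        Category.assoc, h1, nat0 f1]
    · rw [Category.assoc, Category.assoc, hc11, ← Category.assoc, nat1 w,
        Category.assoc, h1, nat1 f1]
  · rw [Category.assoc, hcsg, ← Q.S.map_comp, hs]
end

section
/- In a summable category, the functor S carries a monad structure with unit ι0 = ⟨Id, 0⟩ : X → S X and multiplication τ = ⟨π0∘π0, π1∘π0 + π0∘π1⟩ : S²X → S X; moreover τ ∘ c = τ where c is the flip. -/
open CategoryTheory Limits

universe v u

variable {L : Type u} [Category.{v} L] [HasZeroMorphisms L]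

namespace SummabilityStructure

variable {L : Type u} [Category.{v} L] [HasZeroMorphisms L] (Q : SummabilityStructure L)

lemma nat0 {X Y : L} (f : X ⟶ Y) : Q.S.map f ≫ Q.p0.app Y = Q.p0.app X ≫ f := by
  simpa using Q.p0.naturality f

lemma nat1 {X Y : L} (f : X ⟶ Y) : Q.S.map f ≫ Q.p1.app Y = Q.p1.app X ≫ f := by
  simpa using Q.p1.naturality f

lemma natsg {X Y : L} (f : X ⟶ Y) : Q.S.map f ≫ Q.sg.app Y = Q.sg.app X ≫ f := by
  simpa using Q.sg.naturality f

lemma nat0_assoc {X Y Z : L} (f : X ⟶ Y) (g : Y ⟶ Z) :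
    Q.S.map f ≫ Q.p0.app Y ≫ g = Q.p0.app X ≫ f ≫ g := by
  rw [← Category.assoc, Q.nat0 f, Category.assoc]

lemma nat1_assoc {X Y Z : L} (f : X ⟶ Y) (g : Y ⟶ Z) :
    Q.S.map f ≫ Q.p1.app Y ≫ g = Q.p1.app X ≫ f ≫ g := by
  rw [← Category.assoc, Q.nat1 f, Category.assoc]

lemma natsg_assoc {X Y Z : L} (f : X ⟶ Y) (g : Y ⟶ Z) :
    Q.S.map f ≫ Q.sg.app Y ≫ g = Q.sg.app X ≫ f ≫ g := by
  rw [← Category.assoc, Q.natsg f, Category.assoc]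

lemma wit_unique {X Y : L} {f0 f1 : X ⟶ Y} {w w' : X ⟶ Q.S.obj Y}
    (h : Q.toPreSummability.IsWitness f0 f1 w)
    (h' : Q.toPreSummability.IsWitness f0 f1 w') : w = w' :=
  Q.jointly_monic w w' (h.1.trans h'.1.symm) (h.2.trans h'.2.symm)

lemma sum_unique {X Y : L} {f0 f1 s s' : X ⟶ Y}
    (h : Q.toPreSummability.IsSum f0 f1 s)
    (h' : Q.toPreSummability.IsSum f0 f1 s') : s = s' := by
  obtain ⟨w, hw, hs⟩ := h
  obtain ⟨w', hw', hs'⟩ := h'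
  rw [← hs, ← hs', Q.wit_unique hw hw']

lemma isSum_pre {W X Y : L} (h : W ⟶ X) {f0 f1 s : X ⟶ Y}
    (hs : Q.toPreSummability.IsSum f0 f1 s) :
    Q.toPreSummability.IsSum (h ≫ f0) (h ≫ f1) (h ≫ s) := by
  obtain ⟨w, ⟨h0, h1⟩, hsg⟩ := hs
  exact ⟨h ≫ w, ⟨by rw [Category.assoc, h0], by rw [Category.assoc, h1]⟩,
    by rw [Category.assoc, hsg]⟩

lemma isSum_post {X Y Z : L} (g : Y ⟶ Z) {f0 f1 s : X ⟶ Y}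
    (hs : Q.toPreSummability.IsSum f0 f1 s) :
    Q.toPreSummability.IsSum (f0 ≫ g) (f1 ≫ g) (s ≫ g) := by
  obtain ⟨w, ⟨h0, h1⟩, hsg⟩ := hs
  refine ⟨w ≫ Q.S.map g, ⟨?_, ?_⟩, ?_⟩
  · rw [Category.assoc, Q.nat0 g, ← Category.assoc, h0]
  · rw [Category.assoc, Q.nat1 g, ← Category.assoc, h1]
  · rw [Category.assoc, Q.natsg g, ← Category.assoc, hsg]

lemma isSum_comm {X Y : L} {f0 f1 s : X ⟶ Y}
    (h : Q.toPreSummability.IsSum f0 f1 s) : Q.toPreSummability.IsSum f1 f0 s := by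
  obtain ⟨w, ⟨h0, h1⟩, hsg⟩ := h
  obtain ⟨w', ⟨c0, c1⟩, csg⟩ := Q.ax_com Y
  simp only [Functor.id_obj] at c0 c1
  refine ⟨w ≫ w', ⟨?_, ?_⟩, ?_⟩
  · rw [Category.assoc, c0, h1]
  · rw [Category.assoc, c1, h0]
  · rw [Category.assoc, csg, hsg]

/-- Existence of the flip at every object. -/
lemma flip_exists (Y : L) : ∃ c : Q.S.obj (Q.S.obj Y) ⟶ Q.S.obj (Q.S.obj Y),
    (c ≫ Q.p0.app (Q.S.obj Y) ≫ Q.p0.app Y = Q.p0.app (Q.S.obj Y) ≫ Q.p0.app Y) ∧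
    (c ≫ Q.p0.app (Q.S.obj Y) ≫ Q.p1.app Y = Q.p1.app (Q.S.obj Y) ≫ Q.p0.app Y) ∧
    (c ≫ Q.p1.app (Q.S.obj Y) ≫ Q.p0.app Y = Q.p0.app (Q.S.obj Y) ≫ Q.p1.app Y) ∧
    (c ≫ Q.p1.app (Q.S.obj Y) ≫ Q.p1.app Y = Q.p1.app (Q.S.obj Y) ≫ Q.p1.app Y) := by
  have hsum : Q.toPreSummability.Summable (Q.S.map (Q.p0.app Y)) (Q.S.map (Q.p1.app Y)) := by
    apply Q.ax_wit
    exact ⟨Q.sg.app (Q.S.obj Y), (Q.natsg (Y := Y) (Q.p0.app Y)).symm, (Q.natsg (Y := Y) (Q.p1.app Y)).symm⟩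
  obtain ⟨c, hc0, hc1⟩ := hsum
  simp only [Functor.id_obj] at c hc0 hc1
  refine ⟨c, ?_, ?_, ?_, ?_⟩
  · rw [← Category.assoc, hc0, Q.nat0 (Y := Y) (Q.p0.app Y)]
  · rw [← Category.assoc, hc0, Q.nat1 (Y := Y) (Q.p0.app Y)]
  · rw [← Category.assoc, hc1, Q.nat0 (Y := Y) (Q.p1.app Y)]
  · rw [← Category.assoc, hc1, Q.nat1 (Y := Y) (Q.p1.app Y)]

/-- Associativity of sums. -/
lemma sum_assoc {X Y : L} {a b c u v s t : X ⟶ Y}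
    (hu : Q.toPreSummability.IsSum a b u) (hs : Q.toPreSummability.IsSum u c s)
    (hv : Q.toPreSummability.IsSum b c v) (ht : Q.toPreSummability.IsSum a v t) :
    s = t := by
  obtain ⟨cfl, e1, e2, e3, e4⟩ := Q.flip_exists Y
  have hflip : cfl ≫ Q.S.map (Q.sg.app Y) = Q.sg.app (Q.S.obj Y) :=
    Q.ax_ass Y cfl e1 e2 e3 e4
  obtain ⟨wab, hwab, hwabs⟩ := hu
  obtain ⟨wu, hwu, hwus⟩ := hs
  obtain ⟨wbc, hwbc, hwbcs⟩ := hv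
  obtain ⟨wv, hwv, hwvs⟩ := ht
  -- witness of (0, c) summing to c
  obtain ⟨zc, hzc, hzcs⟩ := Q.ax_zero c
  obtain ⟨wcom, hwcom, hwcoms⟩ := Q.ax_com Y
  obtain ⟨hwcom0, hwcom1⟩ := hwcom
  simp only [Functor.id_obj] at hwcom0 hwcom1
  set z0c : X ⟶ Q.S.obj Y := zc ≫ wcom with hz0c
  have hz0 : z0c ≫ Q.p0.app Y = 0 := by rw [hz0c, Category.assoc, hwcom0, hzc.2]
  have hz1 : z0c ≫ Q.p1.app Y = c := by rw [hz0c, Category.assoc, hwcom1, hzc.1]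
  have hzs : z0c ≫ Q.sg.app Y = c := by rw [hz0c, Category.assoc, hwcoms, hzcs]
  -- witness of (a, 0) summing to a
  obtain ⟨za, hza, hzas⟩ := Q.ax_zero a
  -- the double witness W
  have hWsum : Q.toPreSummability.Summable wab z0c := by
    apply Q.ax_wit
    rw [hwabs, hzs]
    exact ⟨wu, hwu⟩
  obtain ⟨W, hW0, hW1⟩ := hWsum
  -- row sums : W ≫ S(sg) = wu
  have hrow : W ≫ Q.S.map (Q.sg.app Y) = wu := by
    apply Q.wit_unique _ hwu
    constructor
    · rw [Category.assoc, Q.nat0 (Y := Y) (Q.sg.app Y), ← Category.assoc, hW0, hwabs]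
    · rw [Category.assoc, Q.nat1 (Y := Y) (Q.sg.app Y), ← Category.assoc, hW1, hzs]
  -- column sums : W ≫ cfl ≫ S(sg) = wv
  have hcol0 : (W ≫ cfl) ≫ Q.p0.app (Q.S.obj Y) = za := by
    apply Q.wit_unique _ hza
    constructor
    · simp only [Functor.id_obj, Category.assoc]
      rw [e1, ← Category.assoc, hW0, hwab.1]
    · simp only [Functor.id_obj, Category.assoc]
      rw [e2, ← Category.assoc, hW1, hz0]
  have hcol1 : (W ≫ cfl) ≫ Q.p1.app (Q.S.obj Y) = wbc := by
    apply Q.wit_unique _ hwbc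
    constructor
    · simp only [Functor.id_obj, Category.assoc]
      rw [e3, ← Category.assoc, hW0, hwab.2]
    · simp only [Functor.id_obj, Category.assoc]
      rw [e4, ← Category.assoc, hW1, hz1]
  have hcol : (W ≫ cfl) ≫ Q.S.map (Q.sg.app Y) = wv := by
    apply Q.wit_unique _ hwv
    constructor
    · rw [Category.assoc, Q.nat0 (Y := Y) (Q.sg.app Y), ← Category.assoc, hcol0, hzas]
    · rw [Category.assoc, Q.nat1 (Y := Y) (Q.sg.app Y), ← Category.assoc, hcol1, hwbcs]
  calc s = wu ≫ Q.sg.app Y := hwus.symm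
    _ = W ≫ Q.S.map (Q.sg.app Y) ≫ Q.sg.app Y := by rw [← hrow, Category.assoc]
    _ = W ≫ Q.sg.app (Q.S.obj Y) ≫ Q.sg.app Y := by rw [Q.natsg (Y := Y) (Q.sg.app Y)]
    _ = W ≫ cfl ≫ Q.S.map (Q.sg.app Y) ≫ Q.sg.app Y := by
        rw [← Category.assoc cfl, hflip]
    _ = wv ≫ Q.sg.app Y := by rw [← Category.assoc, ← Category.assoc, hcol]
    _ = t := hwvs

end SummabilityStructure


/-- The functor S of a summable category carries a monad structure with unit
ι0 = ⟨Id, 0⟩ and multiplication τ = ⟨π0∘π0, π1∘π0 + π0∘π1⟩ (ι and τ are here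
given by their defining characterizations): ι and τ are natural, satisfy the
monad laws, and τ ∘ c = τ for the flip c. -/
theorem stmt9 (Q : SummabilityStructure L)
    (ι : ∀ X : L, X ⟶ Q.S.obj X)
    (τ : ∀ X : L, Q.S.obj (Q.S.obj X) ⟶ Q.S.obj X)
    (hι : ∀ X : L, Q.toPreSummability.IsWitness (𝟙 X) 0 (ι X))
    (hτ0 : ∀ X : L, τ X ≫ Q.p0.app X = Q.p0.app (Q.S.obj X) ≫ Q.p0.app X)
    (hτ1 : ∀ X : L, Q.toPreSummability.IsSum
        (Q.p1.app (Q.S.obj X) ≫ Q.p0.app X) (Q.p0.app (Q.S.obj X) ≫ Q.p1.app X)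
        (τ X ≫ Q.p1.app X)) :
    (∀ {X Y : L} (f : X ⟶ Y), ι X ≫ Q.S.map f = f ≫ ι Y) ∧
    (∀ {X Y : L} (f : X ⟶ Y),
      Q.S.map (Q.S.map f) ≫ τ Y = τ X ≫ Q.S.map f) ∧
    (∀ X : L, ι (Q.S.obj X) ≫ τ X = 𝟙 (Q.S.obj X)) ∧
    (∀ X : L, Q.S.map (ι X) ≫ τ X = 𝟙 (Q.S.obj X)) ∧
    (∀ X : L, τ (Q.S.obj X) ≫ τ X = Q.S.map (τ X) ≫ τ X) ∧
    (∀ (X : L) (c : Q.S.obj (Q.S.obj X) ⟶ Q.S.obj (Q.S.obj X)),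
      (c ≫ Q.p0.app (Q.S.obj X) ≫ Q.p0.app X = Q.p0.app (Q.S.obj X) ≫ Q.p0.app X) →
      (c ≫ Q.p0.app (Q.S.obj X) ≫ Q.p1.app X = Q.p1.app (Q.S.obj X) ≫ Q.p0.app X) →
      (c ≫ Q.p1.app (Q.S.obj X) ≫ Q.p0.app X = Q.p0.app (Q.S.obj X) ≫ Q.p1.app X) →
      (c ≫ Q.p1.app (Q.S.obj X) ≫ Q.p1.app X = Q.p1.app (Q.S.obj X) ≫ Q.p1.app X) →
      c ≫ τ X = τ X) := by
  have hι0 : ∀ X : L, ι X ≫ Q.p0.app X = 𝟙 X := fun X => (hι X).1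
  have hι1 : ∀ X : L, ι X ≫ Q.p1.app X = 0 := fun X => (hι X).2
  have hι0a : ∀ (X : L) {Z : L} (g : X ⟶ Z), ι X ≫ Q.p0.app X ≫ g = g := by
    intro X Z g; rw [← Category.assoc, hι0, Category.id_comp]
  have hι1a : ∀ (X : L) {Z : L} (g : X ⟶ Z), ι X ≫ Q.p1.app X ≫ g = 0 := by
    intro X Z g; rw [← Category.assoc, hι1, zero_comp]
  have hτ0a : ∀ (X : L) {Z : L} (g : X ⟶ Z),
      τ X ≫ Q.p0.app X ≫ g = Q.p0.app (Q.S.obj X) ≫ Q.p0.app X ≫ g := by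
    intro X Z g; rw [← Category.assoc, hτ0, Category.assoc]
  refine ⟨?_, ?_, ?_, ?_, ?_, ?_⟩
  · -- naturality of ι
    intro X Y f
    apply Q.jointly_monic
    · simp only [Functor.id_obj, Category.assoc, Q.nat0, hι0, hι0a, Category.comp_id]
    · simp only [Functor.id_obj, Category.assoc, Q.nat1, hι1, hι1a, comp_zero]
  · -- naturality of τ
    intro X Y f
    apply Q.jointly_monic
    · simp only [Functor.id_obj, Category.assoc, hτ0, hτ0a, Q.nat0_assoc, Q.nat0]
    · have hA := Q.isSum_pre (Q.S.map (Q.S.map f)) (hτ1 Y)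
      have hB := Q.isSum_post f (hτ1 X)
      simp only [Functor.id_obj, Category.assoc, Q.nat0, Q.nat1, Q.nat0_assoc, Q.nat1_assoc] at hA hB ⊢
      exact Q.sum_unique hA hB
  · -- left unit
    intro X
    apply Q.jointly_monic
    · simp only [Functor.id_obj, Category.assoc, hτ0, hι0a, Category.id_comp]
    · have hA := Q.isSum_pre (ι (Q.S.obj X)) (hτ1 X)
      simp only [Functor.id_obj, Category.assoc, hι0a, hι1a] at hA
      have hB := Q.isSum_comm (Q.ax_zero (Q.p1.app X))
      simp only [Functor.id_obj, Category.assoc, Category.id_comp]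
      exact Q.sum_unique hA hB
  · -- right unit
    intro X
    apply Q.jointly_monic
    · simp only [Functor.id_obj, Category.assoc, hτ0, Q.nat0_assoc, hι0, Category.comp_id,
        Category.id_comp]
    · have hA := Q.isSum_pre (Q.S.map (ι X)) (hτ1 X)
      simp only [Functor.id_obj, Category.assoc, Q.nat0_assoc, Q.nat1_assoc, hι0, hι1,
        Category.comp_id, comp_zero] at hA
      simp only [Functor.id_obj, Category.assoc, Category.id_comp]
      exact Q.sum_unique hA (Q.ax_zero (Q.p1.app X))
  · -- associativity
    intro X
    apply Q.jointly_monic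
    · simp only [Functor.id_obj, Category.assoc, hτ0, hτ0a, Q.nat0_assoc]
    · have hu := Q.isSum_post (Q.p0.app X) (hτ1 (Q.S.obj X))
      have hs := Q.isSum_pre (τ (Q.S.obj X)) (hτ1 X)
      have hv := Q.isSum_pre (Q.p0.app (Q.S.obj (Q.S.obj X))) (hτ1 X)
      have ht := Q.isSum_pre (Q.S.map (τ X)) (hτ1 X)
      simp only [Functor.id_obj, Category.assoc, hτ0, hτ0a, Q.nat0_assoc, Q.nat1_assoc] at hu hs hv ht ⊢
      exact Q.sum_assoc hu hs hv ht
  · -- flip invariance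
    intro X c he1 he2 he3 he4
    apply Q.jointly_monic
    · simp only [Functor.id_obj, Category.assoc, hτ0]
      exact he1
    · have hA := Q.isSum_pre c (hτ1 X)
      simp only [Functor.id_obj, Category.assoc] at hA ⊢
      rw [he3, he2] at hA
      exact Q.sum_unique (Q.isSum_comm hA) (hτ1 X)
end

section
/- In a summable symmetric monoidal category, the strength θ turns (S, ι0, τ) into a commutative strong monad: in particular τ ∘ (S θ') ∘ θ_{S X0, X1} = τ ∘ (S θ) ∘ θ'_{X0, S X1}, where θ' is the symmetric strength, and in fact (S θ')∘θ_{S X0,X1} = c ∘ (S θ)∘θ'_{X0,S X1} with c the flip. -/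
open CategoryTheory Limits

universe v u

variable {L : Type u} [Category.{v} L] [HasZeroMorphisms L]

open MonoidalCategory

/-- In a summable SMC the strength θ makes (S, ι0, τ) a commutative strong
monad: (S θ')∘θ_{S X0,X1} = c ∘ (S θ)∘θ'_{X0,S X1} (with c the flip), and
hence τ ∘ (S θ') ∘ θ_{S X0,X1} = τ ∘ (S θ) ∘ θ'_{X0,S X1}. All strengths are
given by their witness characterizations, the flip and τ by their defining
equations. -/
theorem stmt11 {L : Type u} [Category.{v} L] [MonoidalCategory L] [HasZeroMorphisms L]
    (Q : SummabilityStructure L)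
    (hdist : ∀ {X0 Y0 X1 Y1 : L} (f00 f01 s : X0 ⟶ Y0) (f1 : X1 ⟶ Y1),
      Q.toPreSummability.IsSum f00 f01 s →
      Q.toPreSummability.IsSum (f00 ⊗ₘ f1) (f01 ⊗ₘ f1) (s ⊗ₘ f1))
    {X0 X1 : L}
    (θ0 : X0 ⊗ Q.S.obj X1 ⟶ Q.S.obj (X0 ⊗ X1))
    (hθ0 : Q.toPreSummability.IsWitness (X0 ◁ Q.p0.app X1) (X0 ◁ Q.p1.app X1) θ0)
    (θ'0 : Q.S.obj X0 ⊗ X1 ⟶ Q.S.obj (X0 ⊗ X1))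
    (hθ'0 : Q.toPreSummability.IsWitness (Q.p0.app X0 ▷ X1) (Q.p1.app X0 ▷ X1) θ'0)
    (θA : Q.S.obj X0 ⊗ Q.S.obj X1 ⟶ Q.S.obj (Q.S.obj X0 ⊗ X1))
    (hθA : Q.toPreSummability.IsWitness
      (Q.S.obj X0 ◁ Q.p0.app X1) (Q.S.obj X0 ◁ Q.p1.app X1) θA)
    (θ'B : Q.S.obj X0 ⊗ Q.S.obj X1 ⟶ Q.S.obj (X0 ⊗ Q.S.obj X1))
    (hθ'B : Q.toPreSummability.IsWitness
      (Q.p0.app X0 ▷ Q.S.obj X1) (Q.p1.app X0 ▷ Q.S.obj X1) θ'B)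
    (c : Q.S.obj (Q.S.obj (X0 ⊗ X1)) ⟶ Q.S.obj (Q.S.obj (X0 ⊗ X1)))
    (hc00 : c ≫ Q.p0.app (Q.S.obj (X0 ⊗ X1)) ≫ Q.p0.app (X0 ⊗ X1) =
      Q.p0.app (Q.S.obj (X0 ⊗ X1)) ≫ Q.p0.app (X0 ⊗ X1))
    (hc01 : c ≫ Q.p0.app (Q.S.obj (X0 ⊗ X1)) ≫ Q.p1.app (X0 ⊗ X1) =
      Q.p1.app (Q.S.obj (X0 ⊗ X1)) ≫ Q.p0.app (X0 ⊗ X1))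
    (hc10 : c ≫ Q.p1.app (Q.S.obj (X0 ⊗ X1)) ≫ Q.p0.app (X0 ⊗ X1) =
      Q.p0.app (Q.S.obj (X0 ⊗ X1)) ≫ Q.p1.app (X0 ⊗ X1))
    (hc11 : c ≫ Q.p1.app (Q.S.obj (X0 ⊗ X1)) ≫ Q.p1.app (X0 ⊗ X1) =
      Q.p1.app (Q.S.obj (X0 ⊗ X1)) ≫ Q.p1.app (X0 ⊗ X1))
    (τ : Q.S.obj (Q.S.obj (X0 ⊗ X1)) ⟶ Q.S.obj (X0 ⊗ X1))
    (hτ0 : τ ≫ Q.p0.app (X0 ⊗ X1) =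
      Q.p0.app (Q.S.obj (X0 ⊗ X1)) ≫ Q.p0.app (X0 ⊗ X1))
    (hτ1 : Q.toPreSummability.IsSum
      (Q.p1.app (Q.S.obj (X0 ⊗ X1)) ≫ Q.p0.app (X0 ⊗ X1))
      (Q.p0.app (Q.S.obj (X0 ⊗ X1)) ≫ Q.p1.app (X0 ⊗ X1))
      (τ ≫ Q.p1.app (X0 ⊗ X1))) :
    θA ≫ Q.S.map θ'0 = θ'B ≫ Q.S.map θ0 ≫ c ∧
    θA ≫ Q.S.map θ'0 ≫ τ = θ'B ≫ Q.S.map θ0 ≫ τ := by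
  obtain ⟨hA0, hA1⟩ := hθA
  obtain ⟨hB0, hB1⟩ := hθ'B
  obtain ⟨h00, h01⟩ := hθ0
  obtain ⟨h'0, h'1⟩ := hθ'0
  simp only [Functor.id_obj] at hA0 hA1 hB0 hB1 h00 h01 h'0 h'1
  have nat0 : ∀ {A B : L} (f : A ⟶ B), Q.S.map f ≫ Q.p0.app B = Q.p0.app A ≫ f := by
    intro A B f; simpa using Q.p0.naturality f
  have nat1 : ∀ {A B : L} (f : A ⟶ B), Q.S.map f ≫ Q.p1.app B = Q.p1.app A ≫ f := by
    intro A B f; simpa using Q.p1.naturality f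
  have key : θA ≫ Q.S.map θ'0 = θ'B ≫ Q.S.map θ0 ≫ c := by
    apply Q.jointly_monic
    · apply Q.jointly_monic
      · simp only [Category.assoc]
        slice_lhs 2 3 => rw [nat0 θ'0]
        slice_lhs 1 2 => rw [hA0]
        slice_lhs 2 3 => rw [h'0]
        slice_rhs 3 5 => rw [hc00]
        slice_rhs 2 3 => rw [nat0 θ0]
        slice_rhs 1 2 => rw [hB0]
        slice_rhs 2 3 => rw [h00]
        exact MonoidalCategory.whisker_exchange _ _
      · simp only [Category.assoc]
        slice_lhs 2 3 => rw [nat0 θ'0]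
        slice_lhs 1 2 => rw [hA0]
        slice_lhs 2 3 => rw [h'1]
        slice_rhs 3 5 => rw [hc01]
        slice_rhs 2 3 => rw [nat1 θ0]
        slice_rhs 1 2 => rw [hB1]
        slice_rhs 2 3 => rw [h00]
        exact MonoidalCategory.whisker_exchange _ _
    · apply Q.jointly_monic
      · simp only [Category.assoc]
        slice_lhs 2 3 => rw [nat1 θ'0]
        slice_lhs 1 2 => rw [hA1]
        slice_lhs 2 3 => rw [h'0]
        slice_rhs 3 5 => rw [hc10]
        slice_rhs 2 3 => rw [nat0 θ0]
        slice_rhs 1 2 => rw [hB0]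
        slice_rhs 2 3 => rw [h01]
        exact MonoidalCategory.whisker_exchange _ _
      · simp only [Category.assoc]
        slice_lhs 2 3 => rw [nat1 θ'0]
        slice_lhs 1 2 => rw [hA1]
        slice_lhs 2 3 => rw [h'1]
        slice_rhs 3 5 => rw [hc11]
        slice_rhs 2 3 => rw [nat1 θ0]
        slice_rhs 1 2 => rw [hB1]
        slice_rhs 2 3 => rw [h01]
        exact MonoidalCategory.whisker_exchange _ _
  obtain ⟨w, ⟨hw0, hw1⟩, hws⟩ := hτ1
  obtain ⟨w', ⟨hw'0, hw'1⟩, hw's⟩ := Q.ax_com (X0 ⊗ X1)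
  simp only [Functor.id_obj] at hw0 hw1 hws hw'0 hw'1 hw's
  have hcw : c ≫ w = w ≫ w' := by
    apply Q.jointly_monic
    · simp only [Functor.id_obj, Category.assoc]
      rw [hw'0, hw1, hw0, hc10]
    · simp only [Functor.id_obj, Category.assoc]
      rw [hw'1, hw0, hw1, hc01]
  have hcτ : c ≫ τ = τ := by
    apply Q.jointly_monic
    · simp only [Functor.id_obj, Category.assoc]
      rw [hτ0, hc00]
    · simp only [Functor.id_obj, Category.assoc]
      rw [← hws, ← Category.assoc, hcw, Category.assoc, hw's]
  refine ⟨key, ?_⟩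
  calc θA ≫ Q.S.map θ'0 ≫ τ = (θA ≫ Q.S.map θ'0) ≫ τ := by rw [Category.assoc]
    _ = (θ'B ≫ Q.S.map θ0 ≫ c) ≫ τ := by rw [key]
    _ = θ'B ≫ Q.S.map θ0 ≫ τ := by simp only [Category.assoc]; rw [hcτ]
end

section
/- For any Lafont SMC L, the category of commutative comonoids in L and the Eilenberg–Moore category of !-coalgebras are isomorphic, via the functor sending a comonoid C to (C, δ_C) and the functor sending a coalgebra (P,h) to (P, w∘h, (ε⊗ε)∘c∘h), both acting as the identity on morphisms. -/
open CategoryTheory MonoidalCategory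

universe v u

variable {L : Type u} [Category.{v} L] [MonoidalCategory L] [SymmetricCategory L]

/-- `(X, w, d)` is a commutative comonoid in the SMC `L`. -/
structure IsCComon {X : L} (w : X ⟶ 𝟙_ L) (d : X ⟶ X ⊗ X) : Prop where
  counit : d ≫ (w ▷ X) = (λ_ X).inv
  comm : d ≫ (β_ X X).hom = d
  coassoc : d ≫ (d ▷ X) ≫ (α_ X X X).hom = d ≫ (X ◁ d)

/-- The middle-swap (A ⊗ B) ⊗ (C ⊗ D) ⟶ (A ⊗ C) ⊗ (B ⊗ D). -/
def midSwap (A B C D : L) : (A ⊗ B) ⊗ (C ⊗ D) ⟶ (A ⊗ C) ⊗ (B ⊗ D) :=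
  (α_ A B (C ⊗ D)).hom ≫
    (A ◁ ((α_ B C D).inv ≫ ((β_ B C).hom ▷ D) ≫ (α_ C B D).hom)) ≫
    (α_ A C (B ⊗ D)).inv

/-- `f` is a comonoid morphism from `(X, wX, dX)` to `(Y, wY, dY)`. -/
def IsComonHom {X Y : L} (wX : X ⟶ 𝟙_ L) (dX : X ⟶ X ⊗ X)
    (wY : Y ⟶ 𝟙_ L) (dY : Y ⟶ Y ⊗ Y) (f : X ⟶ Y) : Prop :=
  f ≫ wY = wX ∧ f ≫ dY = dX ≫ (f ⊗ₘ f)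

/-- A Lafont exponential on an SMC: each object `X` has a cofree commutative
comonoid `(!X, w X, c X)` with counit-of-cofreeness `eps X : !X ⟶ X`:
every morphism from a commutative comonoid to `X` lifts uniquely to a
comonoid morphism into `!X`. -/
structure Lafont (L : Type u) [Category.{v} L] [MonoidalCategory L] [SymmetricCategory L] where
  bang : L → L
  eps : ∀ X : L, bang X ⟶ X
  w : ∀ X : L, bang X ⟶ 𝟙_ L
  c : ∀ X : L, bang X ⟶ bang X ⊗ bang X
  comon : ∀ X : L, IsCComon (w X) (c X)
  cofree : ∀ {X C : L} (wC : C ⟶ 𝟙_ L) (dC : C ⟶ C ⊗ C), IsCComon wC dC →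
    ∀ f : C ⟶ X, ∃! g : C ⟶ bang X,
      IsComonHom wC dC (w X) (c X) g ∧ g ≫ eps X = f

set_option linter.unusedSectionVars false in
lemma comonHom_comp {X Y Z : L} {wX : X ⟶ 𝟙_ L} {dX : X ⟶ X ⊗ X}
    {wY : Y ⟶ 𝟙_ L} {dY : Y ⟶ Y ⊗ Y} {wZ : Z ⟶ 𝟙_ L} {dZ : Z ⟶ Z ⊗ Z}
    {f : X ⟶ Y} {g : Y ⟶ Z}
    (hf : IsComonHom wX dX wY dY f) (hg : IsComonHom wY dY wZ dZ g) :
    IsComonHom wX dX wZ dZ (f ≫ g) := by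
  obtain ⟨hf1, hf2⟩ := hf
  obtain ⟨hg1, hg2⟩ := hg
  refine ⟨by rw [Category.assoc, hg1, hf1], ?_⟩
  rw [Category.assoc, hg2, ← Category.assoc, hf2, Category.assoc, tensorHom_comp_tensorHom]

lemma cofree_uniq (E : Lafont L) {X C : L} {wC : C ⟶ 𝟙_ L} {dC : C ⟶ C ⊗ C}
    (hC : IsCComon wC dC) {f : C ⟶ X} {g1 g2 : C ⟶ E.bang X}
    (h1 : IsComonHom wC dC (E.w X) (E.c X) g1) (e1 : g1 ≫ E.eps X = f)
    (h2 : IsComonHom wC dC (E.w X) (E.c X) g2) (e2 : g2 ≫ E.eps X = f) :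
    g1 = g2 := by
  obtain ⟨g, -, hu⟩ := E.cofree wC dC hC f
  rw [hu g1 ⟨h1, e1⟩, hu g2 ⟨h2, e2⟩]

/-- For a Lafont SMC, commutative comonoids and !-coalgebras are in bijective
correspondence, identically on morphisms: (1) the canonical `δ_C` of a
comonoid `C` is a coalgebra structure and the comonoid extracted from it is
`C` again; (2) any coalgebra `(P, h)` yields a commutative comonoid
`(P, w∘h, (ε⊗ε)∘c∘h)` whose canonical coalgebra structure is `h`; (3) a
morphism is a comonoid morphism iff it is a coalgebra morphism. `Digg` and the
functorial action of `!` are given by their characterizations. -/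
theorem stmt15 (E : Lafont L) :
    (∀ (C : L) (wC : C ⟶ 𝟙_ L) (dC : C ⟶ C ⊗ C), IsCComon wC dC →
      ∀ δ : C ⟶ E.bang C,
        (δ ≫ E.eps C = 𝟙 C ∧ δ ≫ E.w C = wC ∧ δ ≫ E.c C = dC ≫ (δ ⊗ₘ δ)) →
        (∀ dg : E.bang C ⟶ E.bang (E.bang C),
          (dg ≫ E.eps (E.bang C) = 𝟙 (E.bang C) ∧ dg ≫ E.w (E.bang C) = E.w C ∧
            dg ≫ E.c (E.bang C) = E.c C ≫ (dg ⊗ₘ dg)) →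
          ∀ bδ : E.bang C ⟶ E.bang (E.bang C),
            (bδ ≫ E.eps (E.bang C) = E.eps C ≫ δ ∧ bδ ≫ E.w (E.bang C) = E.w C ∧
              bδ ≫ E.c (E.bang C) = E.c C ≫ (bδ ⊗ₘ bδ)) →
            δ ≫ dg = δ ≫ bδ) ∧
        δ ≫ E.c C ≫ (E.eps C ⊗ₘ E.eps C) = dC) ∧
    (∀ (P : L) (h : P ⟶ E.bang P), h ≫ E.eps P = 𝟙 P →
      (∀ dg : E.bang P ⟶ E.bang (E.bang P),
        (dg ≫ E.eps (E.bang P) = 𝟙 (E.bang P) ∧ dg ≫ E.w (E.bang P) = E.w P ∧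
          dg ≫ E.c (E.bang P) = E.c P ≫ (dg ⊗ₘ dg)) →
        ∀ bh : E.bang P ⟶ E.bang (E.bang P),
          (bh ≫ E.eps (E.bang P) = E.eps P ≫ h ∧ bh ≫ E.w (E.bang P) = E.w P ∧
            bh ≫ E.c (E.bang P) = E.c P ≫ (bh ⊗ₘ bh)) →
          h ≫ dg = h ≫ bh) →
      IsCComon (h ≫ E.w P) (h ≫ E.c P ≫ (E.eps P ⊗ₘ E.eps P)) ∧
      h ≫ E.c P = (h ≫ E.c P ≫ (E.eps P ⊗ₘ E.eps P)) ≫ (h ⊗ₘ h)) ∧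
    (∀ (C D : L) (wC : C ⟶ 𝟙_ L) (dC : C ⟶ C ⊗ C) (wD : D ⟶ 𝟙_ L) (dD : D ⟶ D ⊗ D),
      IsCComon wC dC → IsCComon wD dD →
      ∀ (δC : C ⟶ E.bang C) (δD : D ⟶ E.bang D),
        (δC ≫ E.eps C = 𝟙 C ∧ δC ≫ E.w C = wC ∧ δC ≫ E.c C = dC ≫ (δC ⊗ₘ δC)) →
        (δD ≫ E.eps D = 𝟙 D ∧ δD ≫ E.w D = wD ∧ δD ≫ E.c D = dD ≫ (δD ⊗ₘ δD)) →
        ∀ f : C ⟶ D,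
          (IsComonHom wC dC wD dD f ↔
            ∀ bf : E.bang C ⟶ E.bang D,
              (bf ≫ E.eps D = E.eps C ≫ f ∧ bf ≫ E.w D = E.w C ∧
                bf ≫ E.c D = E.c C ≫ (bf ⊗ₘ bf)) →
              δC ≫ bf = f ≫ δD)) := by
  refine ⟨?_, ?_, ?_⟩
  · -- Part 1
    intro C wC dC hC δ hδ
    obtain ⟨hδe, hδw, hδc⟩ := hδ
    constructor
    · rintro dg ⟨hde, hdw, hdc⟩ bδ ⟨hbe, hbw, hbc⟩
      refine cofree_uniq E hC (f := δ) ?_ ?_ ?_ ?_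
      · exact comonHom_comp ⟨hδw, hδc⟩ ⟨hdw, hdc⟩
      · rw [Category.assoc, hde, Category.comp_id]
      · exact comonHom_comp ⟨hδw, hδc⟩ ⟨hbw, hbc⟩
      · rw [Category.assoc, hbe, ← Category.assoc, hδe, Category.id_comp]
    · rw [reassoc_of% hδc]
      simp only [tensorHom_comp_tensorHom, hδe, id_tensorHom_id, Category.comp_id]
  · -- Part 2
    intro P h hE hyp
    obtain ⟨dg, ⟨hdH, hde⟩, -⟩ := E.cofree (E.w P) (E.c P) (E.comon P) (𝟙 (E.bang P))
    obtain ⟨bh, ⟨hbH, hbe⟩, -⟩ := E.cofree (E.w P) (E.c P) (E.comon P) (E.eps P ≫ h)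
    obtain ⟨hdw, hdc⟩ : _ ∧ _ := hdH
    obtain ⟨hbw, hbc⟩ : _ ∧ _ := hbH
    have key := hyp dg ⟨hde, hdw, hdc⟩ bh ⟨hbe, hbw, hbc⟩
    have e1 : h ≫ E.c P ≫ (dg ⊗ₘ dg) = h ≫ E.c P ≫ (bh ⊗ₘ bh) := by
      have h2 := congrArg (· ≫ E.c (E.bang P)) key
      simp only [Category.assoc] at h2
      rw [hdc, hbc] at h2
      exact h2
    have e2 : h ≫ E.c P ≫ ((E.eps P ≫ h) ⊗ₘ (E.eps P ≫ h)) = h ≫ E.c P := by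
      have h2 := congrArg (· ≫ (E.eps (E.bang P) ⊗ₘ E.eps (E.bang P))) e1
      simp only [Category.assoc, tensorHom_comp_tensorHom] at h2
      rw [hde, hbe] at h2
      simp only [id_tensorHom_id, Category.comp_id] at h2
      exact h2.symm
    set d' := h ≫ E.c P ≫ (E.eps P ⊗ₘ E.eps P) with hd'
    have keyId : h ≫ E.c P = d' ≫ (h ⊗ₘ h) := by
      conv_lhs => rw [← e2]
      rw [hd']
      simp only [Category.assoc, ← tensorHom_comp_tensorHom]
    have cancelL : ∀ {A : L} (u v : A ⟶ 𝟙_ L ⊗ P),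
        u ≫ (𝟙_ L ◁ h) = v ≫ (𝟙_ L ◁ h) → u = v := by
      intro A u v huv
      have h2 := congrArg (· ≫ (𝟙_ L ◁ E.eps P)) huv
      simp only [Category.assoc, ← MonoidalCategory.whiskerLeft_comp, hE,
        MonoidalCategory.whiskerLeft_id, Category.comp_id] at h2
      exact h2
    have cancel3 : ∀ {A : L} (u v : A ⟶ P ⊗ (P ⊗ P)),
        u ≫ (h ⊗ₘ h ⊗ₘ h) = v ≫ (h ⊗ₘ h ⊗ₘ h) → u = v := by
      intro A u v huv
      have h2 := congrArg (· ≫ (E.eps P ⊗ₘ E.eps P ⊗ₘ E.eps P)) huv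
      simp only [Category.assoc, tensorHom_comp_tensorHom, hE, id_tensorHom_id, Category.comp_id] at h2
      exact h2
    refine ⟨⟨?_, ?_, ?_⟩, keyId⟩
    · -- counit
      apply cancelL
      calc (d' ≫ ((h ≫ E.w P) ▷ P)) ≫ (𝟙_ L ◁ h)
          = d' ≫ ((h ≫ E.w P) ⊗ₘ h) := by
            rw [tensorHom_def (h ≫ E.w P) h]
            simp only [Category.assoc]
        _ = d' ≫ (h ⊗ₘ h) ≫ (E.w P ⊗ₘ 𝟙 (E.bang P)) := by
            simp only [tensorHom_comp_tensorHom, Category.comp_id, Category.id_comp]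
        _ = h ≫ E.c P ≫ (E.w P ⊗ₘ 𝟙 (E.bang P)) := by rw [← reassoc_of% keyId]
        _ = h ≫ E.c P ≫ (E.w P ▷ E.bang P) := by rw [tensorHom_id]
        _ = h ≫ (λ_ (E.bang P)).inv := by rw [(E.comon P).counit]
        _ = (λ_ P).inv ≫ (𝟙_ L ◁ h) := by rw [leftUnitor_inv_naturality]
    · -- comm
      calc d' ≫ (β_ P P).hom
          = h ≫ (E.c P ≫ (β_ (E.bang P) (E.bang P)).hom) ≫ (E.eps P ⊗ₘ E.eps P) := by
            rw [hd']
            simp only [Category.assoc, BraidedCategory.braiding_naturality]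
        _ = d' := by rw [(E.comon P).comm, hd']
    · -- coassoc
      apply cancel3
      calc (d' ≫ (d' ▷ P) ≫ (α_ P P P).hom) ≫ (h ⊗ₘ h ⊗ₘ h)
          = d' ≫ ((d' ⊗ₘ 𝟙 P) ≫ ((h ⊗ₘ h) ⊗ₘ h)) ≫ (α_ (E.bang P) (E.bang P) (E.bang P)).hom := by
            simp only [← tensorHom_id, Category.assoc, ← associator_naturality]
        _ = d' ≫ ((d' ≫ (h ⊗ₘ h)) ⊗ₘ h) ≫ (α_ (E.bang P) (E.bang P) (E.bang P)).hom := by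
            simp only [Category.assoc, tensorHom_comp_tensorHom, Category.id_comp]
        _ = d' ≫ ((h ≫ E.c P) ⊗ₘ h) ≫ (α_ (E.bang P) (E.bang P) (E.bang P)).hom := by
            rw [← keyId]
        _ = d' ≫ ((h ⊗ₘ h) ≫ (E.c P ⊗ₘ 𝟙 (E.bang P))) ≫ (α_ (E.bang P) (E.bang P) (E.bang P)).hom := by
            simp only [tensorHom_comp_tensorHom, Category.comp_id]
        _ = h ≫ E.c P ≫ (E.c P ⊗ₘ 𝟙 (E.bang P)) ≫ (α_ (E.bang P) (E.bang P) (E.bang P)).hom := by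
            simp only [Category.assoc]
            rw [← reassoc_of% keyId]
        _ = h ≫ E.c P ≫ (E.c P ▷ E.bang P) ≫ (α_ (E.bang P) (E.bang P) (E.bang P)).hom := by
            rw [tensorHom_id]
        _ = h ≫ E.c P ≫ (E.bang P ◁ E.c P) := by rw [(E.comon P).coassoc]
        _ = h ≫ E.c P ≫ (𝟙 (E.bang P) ⊗ₘ E.c P) := by rw [id_tensorHom]
        _ = d' ≫ (h ⊗ₘ h) ≫ (𝟙 (E.bang P) ⊗ₘ E.c P) := by rw [reassoc_of% keyId]
        _ = d' ≫ (h ⊗ₘ (h ≫ E.c P)) := by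
            simp only [tensorHom_comp_tensorHom, Category.comp_id, Category.id_comp]
        _ = d' ≫ (h ⊗ₘ (d' ≫ (h ⊗ₘ h))) := by rw [keyId]
        _ = d' ≫ (𝟙 P ⊗ₘ d') ≫ (h ⊗ₘ h ⊗ₘ h) := by
            simp only [Category.assoc, tensorHom_comp_tensorHom, Category.id_comp]
        _ = (d' ≫ (P ◁ d')) ≫ (h ⊗ₘ h ⊗ₘ h) := by
            simp only [id_tensorHom, Category.assoc]
  · -- Part 3
    intro C D wC dC wD dD hC hD δC δD hδC hδD f
    obtain ⟨hCe, hCw, hCc⟩ := hδC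
    obtain ⟨hDe, hDw, hDc⟩ := hδD
    constructor
    · rintro hf bf ⟨hbe, hbw, hbc⟩
      refine cofree_uniq E hC (f := f) ?_ ?_ ?_ ?_
      · exact comonHom_comp ⟨hCw, hCc⟩ ⟨hbw, hbc⟩
      · rw [Category.assoc, hbe, ← Category.assoc, hCe, Category.id_comp]
      · exact comonHom_comp hf ⟨hDw, hDc⟩
      · rw [Category.assoc, hDe, Category.comp_id]
    · intro hall
      obtain ⟨bf, ⟨hbH, hbe⟩, -⟩ := E.cofree (E.w C) (E.c C) (E.comon C) (E.eps C ≫ f)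
      obtain ⟨hbw, hbc⟩ : _ ∧ _ := hbH
      have hmain := hall bf ⟨hbe, hbw, hbc⟩
      constructor
      · rw [← hDw, ← Category.assoc, ← hmain, Category.assoc, hbw, hCw]
      · have hdD : dD = δD ≫ E.c D ≫ (E.eps D ⊗ₘ E.eps D) := by
          symm
          rw [reassoc_of% hDc]
          simp only [tensorHom_comp_tensorHom, hDe, id_tensorHom_id, Category.comp_id]
        rw [hdD, ← Category.assoc, ← hmain, Category.assoc, reassoc_of% hbc,
          reassoc_of% hCc]
        simp only [Category.assoc, tensorHom_comp_tensorHom, hbe, reassoc_of% hCe, Category.id_comp]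
end

section
/- In a Lafont SMC, for any commutative comonoid C, the counit w_C and the comultiplication d_C are coalgebra morphisms: !w_C ∘ δ_C = m⁰ ∘ w_C and !d_C ∘ δ_C = m² ∘ (δ_C ⊗ δ_C) ∘ d_C, where (m⁰, m²) is the lax monoidality of !. -/
open CategoryTheory MonoidalCategory

universe v u

variable {L : Type u} [Category.{v} L] [MonoidalCategory L] [SymmetricCategory L]

lemma midSwap_eq_tensorμ (A B Cc D : L) : midSwap A B Cc D = tensorμ A B Cc D := by
  simp [midSwap, tensorμ, MonoidalCategory.whiskerLeft_comp]

lemma midSwap_natural {A B Cc D A' B' C' D' : L} (f : A ⟶ A') (g : B ⟶ B')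
    (p : Cc ⟶ C') (q : D ⟶ D') :
    ((f ⊗ₘ g) ⊗ₘ (p ⊗ₘ q)) ≫ midSwap A' B' C' D' =
      midSwap A B Cc D ≫ ((f ⊗ₘ p) ⊗ₘ (g ⊗ₘ q)) := by
  rw [midSwap_eq_tensorμ, midSwap_eq_tensorμ]; exact tensorμ_natural f g p q

lemma comon_counit_both {X : L} {w : X ⟶ 𝟙_ L} {d : X ⟶ X ⊗ X}
    (h : IsCComon w d) : d ≫ (w ⊗ₘ w) = w ≫ (λ_ (𝟙_ L)).inv := by
  rw [MonoidalCategory.tensorHom_def, ← Category.assoc, h.counit]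
  simp

lemma comon_d_hom {X : L} {w : X ⟶ 𝟙_ L} {d : X ⟶ X ⊗ X} (h : IsCComon w d) :
    d ≫ (d ⊗ₘ d) ≫ midSwap X X X X = d ≫ (d ⊗ₘ d) := by
  have A := h.coassoc
  have A' : d ≫ (X ◁ d) ≫ (α_ X X X).inv = d ≫ (d ▷ X) := by
    rw [← Category.assoc, ← A]; simp
  have τ : d ≫ (X ◁ d) ≫ (α_ X X X).inv ≫ ((β_ X X).hom ▷ X) ≫ (α_ X X X).hom
      = d ≫ (X ◁ d) := by
    slice_lhs 1 3 => rw [A']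
    slice_lhs 2 3 => rw [← comp_whiskerRight, h.comm]
    exact A
  rw [midSwap, tensorHom_def d d]
  simp only [MonoidalCategory.whiskerLeft_comp, Category.assoc]
  slice_lhs 3 4 => rw [associator_naturality_right]
  slice_lhs 1 3 => rw [A]
  slice_lhs 2 6 =>
    rw [← MonoidalCategory.whiskerLeft_comp, ← MonoidalCategory.whiskerLeft_comp,
      ← MonoidalCategory.whiskerLeft_comp, ← MonoidalCategory.whiskerLeft_comp, τ,
      MonoidalCategory.whiskerLeft_comp]
  slice_lhs 3 4 => rw [associator_inv_naturality_right]
  slice_lhs 1 3 => rw [A']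
  rw [Category.assoc]

/-- In a Lafont SMC, for a commutative comonoid `C` with canonical coalgebra
structure `δ`, the counit and comultiplication are coalgebra morphisms:
`!w_C ∘ δ = m⁰ ∘ w_C` and `!d_C ∘ δ = m² ∘ (δ⊗δ) ∘ d_C`, where `m⁰, m²`
(the lax monoidality of `!`) and `!w_C`, `!d_C` are given by their
characterizations as comonoid morphisms. -/
theorem stmt16 (E : Lafont L) (C : L) (wC : C ⟶ 𝟙_ L) (dC : C ⟶ C ⊗ C)
    (h : IsCComon wC dC) (δ : C ⟶ E.bang C)
    (hδ : δ ≫ E.eps C = 𝟙 C ∧ δ ≫ E.w C = wC ∧ δ ≫ E.c C = dC ≫ (δ ⊗ₘ δ))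
    (m0 : 𝟙_ L ⟶ E.bang (𝟙_ L))
    (hm0 : m0 ≫ E.eps (𝟙_ L) = 𝟙 (𝟙_ L) ∧ m0 ≫ E.w (𝟙_ L) = 𝟙 (𝟙_ L) ∧
      m0 ≫ E.c (𝟙_ L) = (λ_ (𝟙_ L)).inv ≫ (m0 ⊗ₘ m0))
    (m2 : E.bang C ⊗ E.bang C ⟶ E.bang (C ⊗ C))
    (hm2 : m2 ≫ E.eps (C ⊗ C) = E.eps C ⊗ₘ E.eps C ∧
      m2 ≫ E.w (C ⊗ C) = (E.w C ⊗ₘ E.w C) ≫ (λ_ (𝟙_ L)).hom ∧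
      m2 ≫ E.c (C ⊗ C) =
        ((E.c C ⊗ₘ E.c C) ≫ midSwap (E.bang C) (E.bang C) (E.bang C) (E.bang C)) ≫
          (m2 ⊗ₘ m2))
    (bw : E.bang C ⟶ E.bang (𝟙_ L))
    (hbw : bw ≫ E.eps (𝟙_ L) = E.eps C ≫ wC ∧ bw ≫ E.w (𝟙_ L) = E.w C ∧
      bw ≫ E.c (𝟙_ L) = E.c C ≫ (bw ⊗ₘ bw))
    (bd : E.bang C ⟶ E.bang (C ⊗ C))
    (hbd : bd ≫ E.eps (C ⊗ C) = E.eps C ≫ dC ∧ bd ≫ E.w (C ⊗ C) = E.w C ∧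
      bd ≫ E.c (C ⊗ C) = E.c C ≫ (bd ⊗ₘ bd)) :
    δ ≫ bw = wC ≫ m0 ∧ δ ≫ bd = dC ≫ (δ ⊗ₘ δ) ≫ m2 := by
  obtain ⟨hδe, hδw, hδc⟩ := hδ
  obtain ⟨hm0e, hm0w, hm0c⟩ := hm0
  obtain ⟨hm2e, hm2w, hm2c⟩ := hm2
  obtain ⟨hbwe, hbww, hbwc⟩ := hbw
  obtain ⟨hbde, hbdw, hbdc⟩ := hbd
  have hwinv : dC ≫ (wC ⊗ₘ wC) = wC ≫ (λ_ (𝟙_ L)).inv := comon_counit_both h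
  constructor
  · obtain ⟨g, -, hu⟩ := E.cofree wC dC h wC
    have h1 : δ ≫ bw = g := by
      apply hu
      refine ⟨⟨?_, ?_⟩, ?_⟩
      · rw [Category.assoc, hbww, hδw]
      · rw [Category.assoc, hbwc, ← Category.assoc, hδc, Category.assoc,
          tensorHom_comp_tensorHom]
      · rw [Category.assoc, hbwe, ← Category.assoc, hδe, Category.id_comp]
    have h2 : wC ≫ m0 = g := by
      apply hu
      refine ⟨⟨?_, ?_⟩, ?_⟩
      · rw [Category.assoc, hm0w, Category.comp_id]
      · rw [Category.assoc, hm0c, ← Category.assoc, ← hwinv, Category.assoc,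
          tensorHom_comp_tensorHom]
      · rw [Category.assoc, hm0e, Category.comp_id]
    rw [h1, h2]
  · obtain ⟨g, -, hu⟩ := E.cofree wC dC h dC
    have h1 : δ ≫ bd = g := by
      apply hu
      refine ⟨⟨?_, ?_⟩, ?_⟩
      · rw [Category.assoc, hbdw, hδw]
      · rw [Category.assoc, hbdc, ← Category.assoc, hδc, Category.assoc,
          tensorHom_comp_tensorHom]
      · rw [Category.assoc, hbde, ← Category.assoc, hδe, Category.id_comp]
    have h2 : dC ≫ (δ ⊗ₘ δ) ≫ m2 = g := by
      apply hu
      refine ⟨⟨?_, ?_⟩, ?_⟩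
      · rw [Category.assoc, Category.assoc, hm2w, ← Category.assoc (δ ⊗ₘ δ),
          tensorHom_comp_tensorHom, hδw, ← Category.assoc, hwinv, Category.assoc,
          Iso.inv_hom_id, Category.comp_id]
      · rw [Category.assoc, Category.assoc, hm2c]
        calc dC ≫ (δ ⊗ₘ δ) ≫ ((E.c C ⊗ₘ E.c C) ≫
              midSwap (E.bang C) (E.bang C) (E.bang C) (E.bang C)) ≫ (m2 ⊗ₘ m2)
            = dC ≫ (((δ ≫ E.c C) ⊗ₘ (δ ≫ E.c C)) ≫
                midSwap (E.bang C) (E.bang C) (E.bang C) (E.bang C)) ≫ (m2 ⊗ₘ m2) := by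
              rw [← tensorHom_comp_tensorHom]; simp [Category.assoc]
          _ = dC ≫ ((dC ⊗ₘ dC) ≫ ((δ ⊗ₘ δ) ⊗ₘ (δ ⊗ₘ δ)) ≫
                midSwap (E.bang C) (E.bang C) (E.bang C) (E.bang C)) ≫ (m2 ⊗ₘ m2) := by
              rw [hδc, ← tensorHom_comp_tensorHom]; simp [Category.assoc]
          _ = dC ≫ ((dC ⊗ₘ dC) ≫ midSwap C C C C ≫ ((δ ⊗ₘ δ) ⊗ₘ (δ ⊗ₘ δ))) ≫ (m2 ⊗ₘ m2) := by
              rw [midSwap_natural]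
          _ = (dC ≫ (dC ⊗ₘ dC) ≫ midSwap C C C C) ≫ ((δ ⊗ₘ δ) ⊗ₘ (δ ⊗ₘ δ)) ≫ (m2 ⊗ₘ m2) := by
              simp [Category.assoc]
          _ = (dC ≫ (dC ⊗ₘ dC)) ≫ ((δ ⊗ₘ δ) ⊗ₘ (δ ⊗ₘ δ)) ≫ (m2 ⊗ₘ m2) := by
              rw [comon_d_hom h]
          _ = dC ≫ ((dC ≫ (δ ⊗ₘ δ) ≫ m2) ⊗ₘ (dC ≫ (δ ⊗ₘ δ) ≫ m2)) := by
              simp only [← tensorHom_comp_tensorHom, Category.assoc]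
      · rw [Category.assoc, Category.assoc, hm2e, tensorHom_comp_tensorHom, hδe, id_tensorHom_id,
          Category.comp_id]
    rw [h1, h2]
end

section
/- Let L be a cartesian SMC in which I = 1 & 1 is exponentiable, with S X = (I ⊸ X), π_i = evaluation at the point w_i : 1 → I, and σ = evaluation at the diagonal Δ : 1 → I. Then (S, π0, π1, σ) is a pre-summability structure (i.e., π0, π1 are jointly monic) if and only if for every object X the morphisms X ⊗ w0 and X ⊗ w1 are jointly epic. -/
open CategoryTheory MonoidalCategory Limits

universe v u

lemma stmt18_key {L : Type u} [Category.{v} L] [MonoidalCategory L]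
    (I : L) (Sfun : L ⥤ L) (adj : tensorRight I ⊣ Sfun)
    (φ : 𝟙_ L ⟶ I) {X Y : L} (f : X ⟶ Sfun.obj Y) :
    f ≫ ((ρ_ (Sfun.obj Y)).inv ≫ (Sfun.obj Y ◁ φ) ≫ adj.counit.app Y)
      = (ρ_ X).inv ≫ (X ◁ φ) ≫ (adj.homEquiv X Y).symm f := by
  rw [Adjunction.homEquiv_counit]
  have h1 : f ≫ (ρ_ (Sfun.obj Y)).inv = (ρ_ X).inv ≫ (f ▷ 𝟙_ L) := by
    simp
  have h2 : (f ▷ 𝟙_ L) ≫ (Sfun.obj Y ◁ φ) = (X ◁ φ) ≫ (f ▷ I) := by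
    simpa using (whisker_exchange f φ).symm
  have h3 : (tensorRight I).map f = f ▷ I := rfl
  rw [reassoc_of% h1, reassoc_of% h2, h3]

/-- In a cartesian SMC (enriched over pointed sets) where `I = 1 & 1` is
exponentiable (via a right adjoint `Sfun` of `_ ⊗ I`), with
`π_i = evaluation at w_i` and `σ = evaluation at the diagonal`, the pair
`(π0, π1)` is jointly monic (i.e. `(Sfun, π0, π1, σ)` is a pre-summability
structure) iff for every `X` the morphisms `X ⊗ w0` and `X ⊗ w1` are
jointly epic. -/
theorem stmt18 {L : Type u} [Category.{v} L] [MonoidalCategory L]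
    [HasZeroMorphisms L] [HasBinaryProducts L]
    (Sfun : L ⥤ L) (adj : tensorRight (𝟙_ L ⨯ 𝟙_ L) ⊣ Sfun) :
    let I : L := 𝟙_ L ⨯ 𝟙_ L
    let w0 : 𝟙_ L ⟶ I := prod.lift (𝟙 (𝟙_ L)) 0
    let w1 : 𝟙_ L ⟶ I := prod.lift 0 (𝟙 (𝟙_ L))
    let evAt : ∀ (_ : 𝟙_ L ⟶ I) (X : L), Sfun.obj X ⟶ X := fun φ X =>
      (ρ_ (Sfun.obj X)).inv ≫ (Sfun.obj X ◁ φ) ≫ adj.counit.app X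
    ((∀ {X Y : L} (f g : X ⟶ Sfun.obj Y),
        f ≫ evAt w0 Y = g ≫ evAt w0 Y → f ≫ evAt w1 Y = g ≫ evAt w1 Y → f = g)
      ↔
      (∀ (X : L) {Y : L} (f g : X ⊗ I ⟶ Y),
        (X ◁ w0) ≫ f = (X ◁ w0) ≫ g → (X ◁ w1) ≫ f = (X ◁ w1) ≫ g → f = g)) := by
  intro I w0 w1 evAt
  constructor
  · intro hmono X Y f g h0 h1
    have e0 : (adj.homEquiv X Y f) ≫ evAt w0 Y = (adj.homEquiv X Y g) ≫ evAt w0 Y := by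
      rw [stmt18_key I Sfun adj w0, stmt18_key I Sfun adj w0,
        Equiv.symm_apply_apply, Equiv.symm_apply_apply, h0]
    have e1 : (adj.homEquiv X Y f) ≫ evAt w1 Y = (adj.homEquiv X Y g) ≫ evAt w1 Y := by
      rw [stmt18_key I Sfun adj w1, stmt18_key I Sfun adj w1,
        Equiv.symm_apply_apply, Equiv.symm_apply_apply, h1]
    have := hmono _ _ e0 e1
    exact (adj.homEquiv X Y).injective this
  · intro hepi X Y f g h0 h1
    apply (adj.homEquiv X Y).symm.injective
    apply hepi X
    · have := h0
      rw [stmt18_key I Sfun adj w0 f, stmt18_key I Sfun adj w0 g] at this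
      exact (cancel_epi (ρ_ X).inv).mp (by simpa using this)
    · have := h1
      rw [stmt18_key I Sfun adj w1 f, stmt18_key I Sfun adj w1 g] at this
      exact (cancel_epi (ρ_ X).inv).mp (by simpa using this)
end
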